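/- arXiv:2410.04695 — 11 statements merged into one kernel-verified Lean document; each statement's English description precedes it below -/
import Mathlib

section
/- Let f : ℝⁿ → ℝ ∪ {+∞} be proper and lsc, X ⊆ ℝⁿ closed with dom f ∩ X unbounded, and suppose X^∞ ∩ {d : f^∞(d) ≤ 0} = {0}. Then the problem inf_{x∈X} f(x) has weak sharp minima at infinity: there exist c > 0 and R > 0 such that f(x) − f_* ≥ c · dist(x, Sol) for all x ∈ X with ‖x‖ ≥ R, where f_* = inf_X f and Sol = argmin_X f (assumed here, as follows from the hypothesis, to be nonempty and compact with f_* finite). -/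
open Filter Topology Metric Set RealInnerProductSpace

noncomputable section

variable {E : Type*} [NormedAddCommGroup E] [InnerProductSpace ℝ E]

/-- Asymptotic cone of a set. -/
def asympCone (X : Set E) : Set E :=
  {u | ∃ t : ℕ → ℝ, ∃ x : ℕ → E,
    Tendsto t atTop atTop ∧ (∀ k, x k ∈ X) ∧
    Tendsto (fun k => (t k)⁻¹ • x k) atTop (𝓝 u)}

/-- Asymptotic function of an extended-real-valued function. -/
def asympFun (f : E → EReal) (d : E) : EReal :=
  sInf {L : EReal | ∃ t : ℕ → ℝ, ∃ dk : ℕ → E,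
    Tendsto t atTop atTop ∧ Tendsto dk atTop (𝓝 d) ∧
    L = liminf (fun k => (((t k)⁻¹ : ℝ) : EReal) * f (t k • dk k)) atTop}

/-- q-asymptotic function. -/
def qAsympFun (f : E → EReal) (u : E) : EReal :=
  ⨆ x ∈ {x : E | f x ≠ ⊤}, ⨆ t ∈ Set.Ioi (0:ℝ), ((t⁻¹ : ℝ) : EReal) * (f (x + t • u) - f x)

/-- A proper function: never `⊥` and not identically `⊤`. -/
def ERealProper (f : E → EReal) : Prop := (∀ x, f x ≠ ⊥) ∧ ∃ x, f x ≠ ⊤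

/-- Convexity for extended-real-valued functions. -/
def ERealConvexFn (f : E → EReal) : Prop :=
  ∀ x y : E, ∀ a b : ℝ, 0 ≤ a → 0 ≤ b → a + b = 1 →
    f (a • x + b • y) ≤ (a : EReal) * f x + (b : EReal) * f y

/-- Quasiconvexity for extended-real-valued functions. -/
def ERealQuasiconvex (f : E → EReal) : Prop :=
  ∀ x y : E, ∀ a : ℝ, 0 ≤ a → a ≤ 1 →
    f (a • x + (1 - a) • y) ≤ max (f x) (f y)

/-- Solution set of the linearly perturbed problem `inf_{x ∈ X} (f x - ⟪u, x⟫)`. -/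
def Sol (f : E → EReal) (X : Set E) (u : E) : Set E :=
  {x ∈ X | ∀ y ∈ X, f x - ((inner ℝ u x : ℝ) : EReal) ≤ f y - ((inner ℝ u y : ℝ) : EReal)}

/-- Optimal value function of the perturbed problem. -/
def valFn (f : E → EReal) (X : Set E) (u : E) : EReal :=
  ⨅ x ∈ X, (f x - ((inner ℝ u x : ℝ) : EReal))


theorem stmt3 {n : ℕ} (f : EuclideanSpace ℝ (Fin n) → EReal)
    (X : Set (EuclideanSpace ℝ (Fin n)))
    (hproper : ERealProper f) (hlsc : LowerSemicontinuous f) (hX : IsClosed X)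
    (hunb : ¬ Bornology.IsBounded ({x | f x ≠ ⊤} ∩ X))
    (hcone : asympCone X ∩ {d | asympFun f d ≤ 0} = {0})
    (hSolne : ({x ∈ X | ∀ y ∈ X, f x ≤ f y}).Nonempty)
    (hSolcpt : IsCompact {x ∈ X | ∀ y ∈ X, f x ≤ f y})
    (hfin : ∃ r : ℝ, (⨅ x ∈ X, f x) = (r : EReal)) :
    ∃ c > (0:ℝ), ∃ R > (0:ℝ), ∀ x ∈ X, R ≤ ‖x‖ →
      ((c * Metric.infDist x {z ∈ X | ∀ y ∈ X, f z ≤ f y} : ℝ) : EReal)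
        ≤ f x - (⨅ z ∈ X, f z) := by
  obtain ⟨r, hr⟩ := hfin
  -- Coercivity: f grows at least linearly on X far away
  have key : ∃ δ > (0:ℝ), ∃ R₀ : ℝ, ∀ x ∈ X, R₀ ≤ ‖x‖ → ((δ * ‖x‖ : ℝ) : EReal) ≤ f x := by
    by_contra h
    push_neg at h
    choose! xx hxX hxnorm hxlt using fun k : ℕ =>
      h ((k + 1 : ℝ)⁻¹) (by positivity) ((k : ℝ) + 1)
    have htpos : ∀ k : ℕ, (0 : ℝ) < ‖xx k‖ := fun k =>
      lt_of_lt_of_le (by positivity) (hxnorm k)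
    set d : ℕ → EuclideanSpace ℝ (Fin n) := fun k => ‖xx k‖⁻¹ • xx k with hd
    have hdmem : ∀ k, d k ∈ sphere (0 : EuclideanSpace ℝ (Fin n)) 1 := by
      intro k
      simp [hd, norm_smul, abs_of_pos (inv_pos.mpr (htpos k)),
        inv_mul_cancel₀ (htpos k).ne']
    obtain ⟨a, ha, φ, hφ, hφa⟩ := (isCompact_sphere (0 : EuclideanSpace ℝ (Fin n)) 1).tendsto_subseq hdmem
    have hta : Tendsto (fun k => ‖xx (φ k)‖) atTop atTop := by
      apply tendsto_atTop_mono (fun k => ?_) tendsto_natCast_atTop_atTop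
      calc (k : ℝ) ≤ (φ k : ℝ) := by exact_mod_cast hφ.le_apply
        _ ≤ (φ k : ℝ) + 1 := by linarith
        _ ≤ ‖xx (φ k)‖ := hxnorm (φ k)
    have hacone : a ∈ asympCone X :=
      ⟨fun k => ‖xx (φ k)‖, fun k => xx (φ k), hta, fun k => hxX (φ k), hφa⟩
    have hasymp : asympFun f a ≤ 0 := by
      have hmem : liminf (fun k => ((‖xx (φ k)‖⁻¹ : ℝ) : EReal) *
          f (‖xx (φ k)‖ • d (φ k))) atTop ∈
          {L : EReal | ∃ t : ℕ → ℝ, ∃ dk : ℕ → EuclideanSpace ℝ (Fin n),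
            Tendsto t atTop atTop ∧ Tendsto dk atTop (𝓝 a) ∧
            L = liminf (fun k => (((t k)⁻¹ : ℝ) : EReal) * f (t k • dk k)) atTop} :=
        ⟨fun k => ‖xx (φ k)‖, fun k => d (φ k), hta, hφa, rfl⟩
      refine le_trans (sInf_le hmem) ?_
      have hbound : ∀ k, ((‖xx (φ k)‖⁻¹ : ℝ) : EReal) * f (‖xx (φ k)‖ • d (φ k)) ≤
          ((((φ k : ℝ) + 1)⁻¹ : ℝ) : EReal) := by
        intro k
        have hsm : ‖xx (φ k)‖ • d (φ k) = xx (φ k) := by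
          rw [hd]; exact smul_inv_smul₀ (htpos (φ k)).ne' _
        rw [hsm]
        have hne : f (xx (φ k)) ≠ ⊤ := by
          intro hT
          have := hxlt (φ k)
          rw [hT] at this
          exact (not_top_lt this)
        obtain ⟨v, hv⟩ : ∃ v : ℝ, f (xx (φ k)) = (v : EReal) :=
          ⟨(f (xx (φ k))).toReal, (EReal.coe_toReal hne (hproper.1 _)).symm⟩
        rw [hv]
        have hvlt : v < ((φ k : ℝ) + 1)⁻¹ * ‖xx (φ k)‖ := by
          have := hxlt (φ k)
          rw [hv] at this
          exact_mod_cast this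
        rw [← EReal.coe_mul]
        apply EReal.coe_le_coe_iff.mpr
        rw [inv_mul_le_iff₀ (htpos (φ k))]
        calc v ≤ ((φ k : ℝ) + 1)⁻¹ * ‖xx (φ k)‖ := hvlt.le
          _ = ‖xx (φ k)‖ * ((φ k : ℝ) + 1)⁻¹ := mul_comm _ _
      refine le_trans (liminf_le_liminf (Eventually.of_forall hbound)) ?_
      have hlim : Tendsto (fun k => ((((φ k : ℝ) + 1)⁻¹ : ℝ) : EReal)) atTop (𝓝 (0 : EReal)) := by
        rw [show ((0 : EReal)) = ((0 : ℝ) : EReal) by simp]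
        rw [EReal.tendsto_coe]
        apply Tendsto.inv_tendsto_atTop
        apply tendsto_atTop_add_const_right
        exact tendsto_natCast_atTop_atTop.comp hφ.tendsto_atTop
      rw [hlim.liminf_eq]
    have : a = 0 := by
      have : a ∈ asympCone X ∩ {d | asympFun f d ≤ 0} := ⟨hacone, hasymp⟩
      rw [hcone] at this
      exact this
    rw [this] at ha
    simp at ha
  obtain ⟨δ, hδ, R₀, hcoer⟩ := key
  obtain ⟨z₀, hz₀⟩ := hSolne
  obtain ⟨M, hM⟩ := hSolcpt.isBounded.subset_closedBall 0
  have hz₀M : ‖z₀‖ ≤ M := by simpa using hM hz₀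
  have hM0 : 0 ≤ M := le_trans (norm_nonneg _) hz₀M
  refine ⟨δ / 2, by positivity, max R₀ (2 * |r| / δ + M + 1), ?_, ?_⟩
  · have : (0:ℝ) < 2 * |r| / δ + M + 1 := by positivity
    exact lt_of_lt_of_le this (le_max_right _ _)
  · intro x hx hR
    have hxR₀ : R₀ ≤ ‖x‖ := le_trans (le_max_left _ _) hR
    have hxbig : 2 * |r| / δ + M + 1 ≤ ‖x‖ := le_trans (le_max_right _ _) hR
    have hdist : infDist x {z ∈ X | ∀ y ∈ X, f z ≤ f y} ≤ ‖x‖ + M := by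
      calc infDist x {z ∈ X | ∀ y ∈ X, f z ≤ f y} ≤ dist x z₀ := infDist_le_dist_of_mem hz₀
        _ = ‖x - z₀‖ := dist_eq_norm _ _
        _ ≤ ‖x‖ + ‖z₀‖ := norm_sub_le _ _
        _ ≤ ‖x‖ + M := by linarith
    have hreal : δ / 2 * infDist x {z ∈ X | ∀ y ∈ X, f z ≤ f y} ≤ δ * ‖x‖ - r := by
      have h1 : δ / 2 * infDist x {z ∈ X | ∀ y ∈ X, f z ≤ f y} ≤ δ / 2 * (‖x‖ + M) :=
        mul_le_mul_of_nonneg_left hdist (by positivity)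
      have h2 : δ / 2 * (2 * |r| / δ + M + 1) ≤ δ / 2 * ‖x‖ :=
        mul_le_mul_of_nonneg_left hxbig (by positivity)
      have h3 : δ / 2 * (2 * |r| / δ) = |r| := by field_simp
      have h4 : r ≤ |r| := le_abs_self r
      nlinarith
    calc ((δ / 2 * infDist x {z ∈ X | ∀ y ∈ X, f z ≤ f y} : ℝ) : EReal)
        ≤ ((δ * ‖x‖ - r : ℝ) : EReal) := EReal.coe_le_coe_iff.mpr hreal
      _ = ((δ * ‖x‖ : ℝ) : EReal) - (r : EReal) := EReal.coe_sub _ _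
      _ ≤ f x - (r : EReal) := EReal.sub_le_sub (hcoer x hx hxR₀) le_rfl
      _ = f x - (⨅ z ∈ X, f z) := by rw [hr]
end
end

section
/- Let f : ℝⁿ → ℝ ∪ {+∞} be proper and lsc, X ⊆ ℝⁿ closed with dom f ∩ X unbounded. If X^∞ ∩ {d : f^∞(d) ≤ 0} = {0}, then f is coercive on X, i.e., f(x) → +∞ as ‖x‖ → ∞ with x ∈ X. -/
open Filter Topology Metric Set RealInnerProductSpace

noncomputable section

variable {E : Type*} [NormedAddCommGroup E] [InnerProductSpace ℝ E]

theorem stmt4 {n : ℕ} (f : EuclideanSpace ℝ (Fin n) → EReal)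
    (X : Set (EuclideanSpace ℝ (Fin n)))
    (hproper : ERealProper f) (hlsc : LowerSemicontinuous f) (hX : IsClosed X)
    (hunb : ¬ Bornology.IsBounded ({x | f x ≠ ⊤} ∩ X))
    (hcone : asympCone X ∩ {d | asympFun f d ≤ 0} = {0}) :
    ∀ M : ℝ, ∃ R : ℝ, ∀ x ∈ X, R < ‖x‖ → (M : EReal) < f x := by
  by_contra h
  push_neg at h
  obtain ⟨M, hM⟩ := h
  choose x hxX hxn hxf using fun k : ℕ => hM k
  -- t k = ‖x k‖ > k
  set t : ℕ → ℝ := fun k => ‖x k‖ with ht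
  have htpos : ∀ k, 0 < t k := fun k =>
    lt_of_le_of_lt (Nat.cast_nonneg k) (hxn k)
  have htne : ∀ k, t k ≠ 0 := fun k => (htpos k).ne'
  set dk : ℕ → EuclideanSpace ℝ (Fin n) := fun k => (t k)⁻¹ • x k with hdk
  have hdsphere : ∀ k, dk k ∈ sphere (0 : EuclideanSpace ℝ (Fin n)) 1 := by
    intro k
    rw [mem_sphere_iff_norm, sub_zero]
    simp only [hdk, norm_smul, norm_inv, Real.norm_eq_abs, abs_of_pos (htpos k)]
    exact inv_mul_cancel₀ (htne k)
  obtain ⟨d, hdmem, φ, hφ, hconv⟩ :=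
    (isCompact_sphere (0 : EuclideanSpace ℝ (Fin n)) 1).tendsto_subseq hdsphere
  have htt : Tendsto (fun k => t (φ k)) atTop atTop := by
    apply tendsto_atTop_mono (fun k => (le_trans (le_trans (Nat.cast_le.2 hφ.le_apply)
      (hxn (φ k)).le) le_rfl))
    exact tendsto_natCast_atTop_atTop
  have hcone1 : d ∈ asympCone X := by
    exact ⟨fun k => t (φ k), fun k => x (φ k), htt, fun k => hxX (φ k), hconv⟩
  have hcone2 : asympFun f d ≤ 0 := by
    rw [asympFun]
    have hmem : liminf (fun k =>
        (((t (φ k))⁻¹ : ℝ) : EReal) * f (t (φ k) • dk (φ k))) atTop ∈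
        {L : EReal | ∃ t' : ℕ → ℝ, ∃ dk' : ℕ → EuclideanSpace ℝ (Fin n),
          Tendsto t' atTop atTop ∧ Tendsto dk' atTop (𝓝 d) ∧
          L = liminf (fun k => (((t' k)⁻¹ : ℝ) : EReal) * f (t' k • dk' k)) atTop} :=
      ⟨fun k => t (φ k), fun k => dk (φ k), htt, hconv, rfl⟩
    refine le_trans (sInf_le hmem) ?_
    · have heq : ∀ k, t (φ k) • dk (φ k) = x (φ k) := fun k =>
        smul_inv_smul₀ (htne (φ k)) (x (φ k))
      calc liminf (fun k => (((t (φ k))⁻¹ : ℝ) : EReal) * f (t (φ k) • dk (φ k))) atTop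
          ≤ liminf (fun k => ((((t (φ k))⁻¹ * M : ℝ)) : EReal)) atTop := by
            refine liminf_le_liminf ?_ isBounded_ge_of_bot isCobounded_ge_of_top
            filter_upwards with k
            rw [heq k, EReal.coe_mul]
            exact mul_le_mul_of_nonneg_left (hxf (φ k))
              (by exact_mod_cast inv_nonneg.2 (htpos (φ k)).le)
        _ = ((0 : ℝ) : EReal) := by
            apply Tendsto.liminf_eq
            apply EReal.tendsto_coe.2
            simpa using (htt.inv_tendsto_atTop).mul_const M
        _ = 0 := EReal.coe_zero
  have hd0 : d = 0 := by
    have : d ∈ asympCone X ∩ {d | asympFun f d ≤ 0} := ⟨hcone1, hcone2⟩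
    rw [hcone] at this
    exact this
  rw [mem_sphere_iff_norm, sub_zero, hd0] at hdmem
  simp at hdmem
end
end

section
/- Let X ⊆ ℝⁿ be a nonempty closed convex set and f : ℝⁿ → ℝ ∪ {+∞} a proper lsc convex function with dom f ∩ X unbounded. Then X^∞ ∩ {d : f^∞(d) ≤ 0} = {0} if and only if the solution set argmin_X f is nonempty and compact. -/
open Filter Topology Metric Set RealInnerProductSpace

noncomputable section

variable {E : Type*} [NormedAddCommGroup E] [InnerProductSpace ℝ E]

-- helper lemmas
theorem ray_mem {X : Set E} (hXcl : IsClosed X) (hXconv : Convex ℝ X)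
    {x d : E} (hx : x ∈ X) (hd : d ∈ asympCone X) {s : ℝ} (hs : 0 < s) :
    x + s • d ∈ X := by
  obtain ⟨t, xk, ht, hxk, hlim⟩ := hd
  have hto : Tendsto (fun k => s / t k) atTop (𝓝 0) := tendsto_const_nhds.div_atTop ht
  have hz : Tendsto (fun k => (1 - s / t k) • x + s • ((t k)⁻¹ • xk k)) atTop
      (𝓝 (x + s • d)) := by
    have h1 : Tendsto (fun k => (1 - s / t k) • x) atTop (𝓝 x) := by
      have : Tendsto (fun k => (1 - s / t k)) atTop (𝓝 1) := by
        simpa using (tendsto_const_nhds (x := (1:ℝ))).sub hto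
      simpa using this.smul_const x
    have h2 : Tendsto (fun k => s • ((t k)⁻¹ • xk k)) atTop (𝓝 (s • d)) :=
      hlim.const_smul s
    exact h1.add h2
  refine hXcl.mem_of_tendsto hz ?_
  have hev : ∀ᶠ k in atTop, s < t k := ht.eventually_gt_atTop s
  filter_upwards [hev] with k hk
  have htk : (0:ℝ) < t k := hs.trans hk
  have hlm0 : 0 ≤ s / t k := le_of_lt (div_pos hs htk)
  have hlm1 : s / t k ≤ 1 := by
    rw [div_le_one htk]; exact hk.le
  have hsm : s • ((t k)⁻¹ • xk k) = (s / t k) • xk k := by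
    rw [smul_smul, div_eq_mul_inv]
  rw [hsm]
  exact hXconv hx (hxk k) (by linarith) hlm0 (by ring)

-- decrease along asymptotic direction
theorem decrease {f : E → EReal} (hconv : ERealConvexFn f) (hlsc : LowerSemicontinuous f)
    (hbot : ∀ x, f x ≠ ⊥) {d : E} (hd : asympFun f d ≤ 0) (x : E) {s : ℝ} (hs : 0 < s) :
    f (x + s • d) ≤ f x := by
  rcases eq_or_ne (f x) ⊤ with hfx | hfx
  · rw [hfx]; exact le_top
  lift f x to ℝ using ⟨hfx, hbot x⟩ with r hr
  -- suffices: ∀ c > 0, f (x + s • d) ≤ r + c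
  have key : ∀ c : ℝ, 0 < c → f (x + s • d) ≤ ((r + c : ℝ) : EReal) := by
    intro c hc
    by_contra hcon
    push_neg at hcon
    have hev0 : ∀ᶠ z in 𝓝 (x + s • d), ((r + c : ℝ) : EReal) < f z := hlsc _ _ hcon
    set ε : ℝ := c / (2 * s) with hε
    have hεpos : 0 < ε := by positivity
    have hlt : asympFun f d < ((ε : ℝ) : EReal) := lt_of_le_of_lt hd (by exact_mod_cast hεpos)
    rw [asympFun, sInf_lt_iff] at hlt
    obtain ⟨L, ⟨t, dk, ht, hdk, hL⟩, hLlt⟩ := hlt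
    rw [hL] at hLlt
    have hfreq : ∃ᶠ k in atTop, (((t k)⁻¹ : ℝ) : EReal) * f (t k • dk k) < (ε : EReal) :=
      frequently_lt_of_liminf_lt (h := hLlt)
    -- z k → x + s • d
    have hto : Tendsto (fun k => s / t k) atTop (𝓝 0) := tendsto_const_nhds.div_atTop ht
    have hz : Tendsto (fun k => (1 - s / t k) • x + s • dk k) atTop (𝓝 (x + s • d)) := by
      have h1 : Tendsto (fun k => (1 - s / t k) • x) atTop (𝓝 x) := by
        have : Tendsto (fun k => (1 - s / t k)) atTop (𝓝 1) := by
          simpa using (tendsto_const_nhds (x := (1:ℝ))).sub hto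
        simpa using this.smul_const x
      exact h1.add (hdk.const_smul s)
    have hev1 : ∀ᶠ k in atTop, ((r + c : ℝ) : EReal) < f ((1 - s / t k) • x + s • dk k) :=
      hz.eventually hev0
    have hev2 : ∀ᶠ k in atTop, s < t k := ht.eventually_gt_atTop s
    have hev3 : ∀ᶠ k in atTop, (1 - s / t k) * r + c / 2 < r + c := by
      have : Tendsto (fun k => (1 - s / t k) * r + c / 2) atTop (𝓝 (r + c / 2)) := by
        have h1 : Tendsto (fun k => (1 - s / t k)) atTop (𝓝 1) := by
          simpa using (tendsto_const_nhds (x := (1:ℝ))).sub hto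
        simpa using (h1.mul_const r).add (tendsto_const_nhds (x := c/2))
      exact this.eventually_lt_const (by linarith)
    obtain ⟨k, ⟨⟨hk1, hk2⟩, hk3⟩, hk4⟩ := (((hev1.and hev2).and hev3).and_frequently hfreq).exists
    -- rename
    have htk : (0:ℝ) < t k := hs.trans hk2
    set lam : ℝ := s / t k with hlam
    have hlam0 : 0 ≤ lam := le_of_lt (div_pos hs htk)
    have hlam1 : lam ≤ 1 := by rw [hlam, div_le_one htk]; exact hk2.le
    have hzeq : (1 - lam) • x + s • dk k = (1 - lam) • x + lam • (t k • dk k) := by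
      rw [smul_smul]
      congr 2
      rw [hlam]; field_simp [htk.ne']
    have hcv := hconv x (t k • dk k) (1 - lam) lam (by linarith) hlam0 (by ring)
    rw [← hzeq] at hcv
    -- bound second term
    have hmul : ((lam : ℝ) : EReal) * f (t k • dk k)
        = ((s:ℝ) : EReal) * ((((t k)⁻¹ : ℝ) : EReal) * f (t k • dk k)) := by
      rw [← mul_assoc, ← EReal.coe_mul, hlam, div_eq_mul_inv]
    have hb2 : ((lam : ℝ) : EReal) * f (t k • dk k) ≤ ((c/2 : ℝ) : EReal) := by
      rw [hmul]
      calc ((s:ℝ) : EReal) * ((((t k)⁻¹ : ℝ) : EReal) * f (t k • dk k))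
          ≤ ((s:ℝ) : EReal) * (ε : EReal) :=
            mul_le_mul_of_nonneg_left hk4.le (by exact_mod_cast hs.le)
        _ = ((s * ε : ℝ) : EReal) := by rw [EReal.coe_mul]
        _ = ((c/2 : ℝ) : EReal) := by
            congr 1
            rw [hε]; field_simp
    have hb1 : (((1 - lam : ℝ)) : EReal) * f x = (((1 - lam) * r : ℝ) : EReal) := by
      rw [← hr, ← EReal.coe_mul]
    have : f ((1 - lam) • x + s • dk k) ≤ (((1 - lam) * r + c/2 : ℝ) : EReal) := by
      calc f ((1 - lam) • x + s • dk k)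
          ≤ (((1 - lam : ℝ)) : EReal) * f x + ((lam : ℝ) : EReal) * f (t k • dk k) := hcv
        _ ≤ (((1 - lam) * r : ℝ) : EReal) + ((c/2 : ℝ) : EReal) := by
            rw [hb1]; exact add_le_add le_rfl hb2
        _ = (((1 - lam) * r + c/2 : ℝ) : EReal) := by rw [← EReal.coe_add]
    have hlt2 : f ((1 - lam) • x + s • dk k) < ((r + c : ℝ) : EReal) :=
      lt_of_le_of_lt this (by exact_mod_cast hk3)
    exact absurd (hk1.trans hlt2) (lt_irrefl _)
  -- conclude
  by_contra hcon
  push_neg at hcon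
  obtain ⟨q, hq1, hq2⟩ := EReal.exists_between_coe_real hcon
  have hqr : r < q := by exact_mod_cast hq1
  have := key (q - r) (by linarith)
  rw [show r + (q - r) = q by ring] at this
  exact absurd (lt_of_le_of_lt this hq2) (lt_irrefl _)


theorem natT : Tendsto (fun k : ℕ => (k : ℝ) + 1) atTop atTop :=
  tendsto_atTop_add_const_right _ 1 tendsto_natCast_atTop_atTop

theorem zero_mem_cone {X : Set E} (hne : X.Nonempty) : (0:E) ∈ asympCone X := by
  obtain ⟨x₀, hx₀⟩ := hne
  refine ⟨fun k => (k:ℝ) + 1, fun _ => x₀, natT, fun _ => hx₀, ?_⟩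
  have h1 : Tendsto (fun k : ℕ => ((k:ℝ) + 1)⁻¹) atTop (𝓝 0) := natT.inv_tendsto_atTop
  simpa using h1.smul_const x₀

theorem asympFun_zero_le {f : E → EReal} {x₀ : E} {r : ℝ} (hx₀ : f x₀ = (r : EReal)) :
    asympFun f (0:E) ≤ 0 := by
  apply sInf_le
  refine ⟨fun k => (k:ℝ) + 1, fun k => ((k:ℝ) + 1)⁻¹ • x₀, natT, ?_, ?_⟩
  · have h1 : Tendsto (fun k : ℕ => ((k:ℝ) + 1)⁻¹) atTop (𝓝 0) := natT.inv_tendsto_atTop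
    simpa using h1.smul_const x₀
  · have hsm : ∀ k : ℕ, ((k:ℝ) + 1) • (((k:ℝ) + 1)⁻¹ • x₀) = x₀ := by
      intro k
      rw [smul_inv_smul₀]
      positivity
    have : Tendsto (fun k : ℕ => ((((k:ℝ)+1)⁻¹ : ℝ) : EReal) * f (((k:ℝ)+1) • (((k:ℝ)+1)⁻¹ • x₀)))
        atTop (𝓝 0) := by
      have heq : ∀ k : ℕ, ((((k:ℝ)+1)⁻¹ : ℝ) : EReal) * f (((k:ℝ)+1) • (((k:ℝ)+1)⁻¹ • x₀))
          = ((((k:ℝ)+1)⁻¹ * r : ℝ) : EReal) := by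
        intro k
        rw [hsm k, hx₀, EReal.coe_mul]
      simp only [heq]
      have : Tendsto (fun k : ℕ => ((k:ℝ)+1)⁻¹ * r) atTop (𝓝 0) := by
        simpa using natT.inv_tendsto_atTop.mul_const r
      have h2 := EReal.tendsto_coe.2 this
      rw [EReal.coe_zero] at h2
      exact h2
    rw [this.liminf_eq]

-- unbounded sublevel gives asymptotic direction (finite dim / proper space)
theorem unbounded_dir [ProperSpace E] {f : E → EReal} {X : Set E} {α : ℝ}
    (x : ℕ → E) (hxX : ∀ k, x k ∈ X) (hxf : ∀ k, f (x k) ≤ (α : EReal))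
    (hnorm : ∀ k : ℕ, (k : ℝ) < ‖x k‖) :
    ∃ d : E, ‖d‖ = 1 ∧ d ∈ asympCone X ∧ asympFun f d ≤ 0 := by
  have hpos : ∀ k, (0:ℝ) < ‖x k‖ := fun k => lt_of_le_of_lt (Nat.cast_nonneg k) (hnorm k)
  set u : ℕ → E := fun k => ‖x k‖⁻¹ • x k with hu
  have husph : ∀ k, u k ∈ sphere (0:E) 1 := by
    intro k
    simp [hu, norm_smul, abs_of_pos (inv_pos.2 (hpos k)), inv_mul_cancel₀ (hpos k).ne']
  obtain ⟨d, hdsph, φ, hφ, hdlim⟩ := (isCompact_sphere (0:E) 1).tendsto_subseq husph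
  have hdn : ‖d‖ = 1 := by simpa using mem_sphere_zero_iff_norm.1 hdsph
  have htT : Tendsto (fun k => ‖x (φ k)‖) atTop atTop := by
    apply tendsto_atTop_mono (fun k => (hnorm (φ k)).le.trans le_rfl)
    · exact tendsto_natCast_atTop_atTop.comp hφ.tendsto_atTop
  refine ⟨d, hdn, ⟨fun k => ‖x (φ k)‖, fun k => x (φ k), htT, fun k => hxX (φ k), hdlim⟩, ?_⟩
  have hL : asympFun f d ≤ liminf
      (fun k => ((‖x (φ k)‖⁻¹ : ℝ) : EReal) * f (‖x (φ k)‖ • u (φ k))) atTop := by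
    apply sInf_le
    exact ⟨fun k => ‖x (φ k)‖, fun k => u (φ k), htT, hdlim, rfl⟩
  refine hL.trans ?_
  have hsm : ∀ k, ‖x (φ k)‖ • u (φ k) = x (φ k) := fun k =>
    smul_inv_smul₀ (hpos (φ k)).ne' _
  have hle : ∀ k, ((‖x (φ k)‖⁻¹ : ℝ) : EReal) * f (‖x (φ k)‖ • u (φ k))
      ≤ ((‖x (φ k)‖⁻¹ * α : ℝ) : EReal) := by
    intro k
    rw [hsm k, EReal.coe_mul]
    exact mul_le_mul_of_nonneg_left (hxf (φ k)) (by exact_mod_cast (inv_pos.2 (hpos (φ k))).le)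
  calc liminf (fun k => ((‖x (φ k)‖⁻¹ : ℝ) : EReal) * f (‖x (φ k)‖ • u (φ k))) atTop
      ≤ liminf (fun k => ((‖x (φ k)‖⁻¹ * α : ℝ) : EReal)) atTop :=
        liminf_le_liminf (Eventually.of_forall hle)
    _ = 0 := by
        have : Tendsto (fun k => ‖x (φ k)‖⁻¹ * α) atTop (𝓝 0) := by
          simpa using htT.inv_tendsto_atTop.mul_const α
        have := EReal.tendsto_coe.2 this
        rw [show ((0:ℝ) : EReal) = (0 : EReal) by rfl] at this
        exact this.liminf_eq

-- lsc attains min on nonempty compact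
theorem lsc_min {f : E → EReal} (hlsc : LowerSemicontinuous f) {K : Set E}
    (hK : IsCompact K) (hne : K.Nonempty) : ∃ x ∈ K, ∀ y ∈ K, f x ≤ f y := by
  have hcl : ∀ c : EReal, IsClosed {x | f x ≤ c} := by
    intro c
    have := hlsc.isClosed_preimage c
    simpa [Set.preimage, Set.Iic] using this
  haveI : Nonempty K := hne.to_subtype
  have h := IsCompact.nonempty_iInter_of_directed_nonempty_isCompact_isClosed
    (fun y : K => K ∩ {x | f x ≤ f y}) ?_ ?_ ?_ ?_
  · obtain ⟨x, hx⟩ := h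
    simp only [Set.mem_iInter, Set.mem_inter_iff] at hx
    obtain ⟨y₀⟩ := (inferInstance : Nonempty K)
    exact ⟨x, (hx y₀).1, fun y hy => (hx ⟨y, hy⟩).2⟩
  · intro a b
    rcases le_total (f a) (f b) with hab | hab
    · exact ⟨a, subset_rfl, Set.inter_subset_inter_right _ (fun z hz => le_trans hz hab)⟩
    · exact ⟨b, Set.inter_subset_inter_right _ (fun z hz => le_trans hz hab), subset_rfl⟩
  · exact fun y => ⟨y, y.2, le_refl (f y)⟩
  · exact fun y => hK.inter_right (hcl _)
  · exact fun y => (hK.isClosed).inter (hcl _)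


theorem stmt5 {n : ℕ} (f : EuclideanSpace ℝ (Fin n) → EReal)
    (X : Set (EuclideanSpace ℝ (Fin n)))
    (hne : X.Nonempty) (hXcl : IsClosed X) (hXconv : Convex ℝ X)
    (hproper : ERealProper f) (hlsc : LowerSemicontinuous f) (hconv : ERealConvexFn f)
    (hunb : ¬ Bornology.IsBounded ({x | f x ≠ ⊤} ∩ X)) :
    asympCone X ∩ {d | asympFun f d ≤ 0} = {0} ↔
      (({x ∈ X | ∀ y ∈ X, f x ≤ f y}).Nonempty ∧
        IsCompact {x ∈ X | ∀ y ∈ X, f x ≤ f y}) := by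
  -- a point of X in the domain of f
  have hdomX : ({x | f x ≠ ⊤} ∩ X).Nonempty := by
    rcases Set.eq_empty_or_nonempty ({x | f x ≠ ⊤} ∩ X) with h | h
    · rw [h] at hunb; exact absurd Bornology.isBounded_empty hunb
    · exact h
  obtain ⟨x₀, hx₀dom, hx₀X⟩ := hdomX
  obtain ⟨r₀, hr₀⟩ : ∃ r : ℝ, f x₀ = (r : EReal) := by
    lift (f x₀) to ℝ using ⟨hx₀dom, hproper.1 x₀⟩ with r hr
    exact ⟨r, rfl⟩
  have hcl : ∀ c : EReal, IsClosed {x : EuclideanSpace ℝ (Fin n) | f x ≤ c} := by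
    intro c
    have := hlsc.isClosed_preimage c
    simpa [Set.preimage, Set.Iic] using this
  constructor
  · -- forward direction
    intro hlhs
    set S : Set (EuclideanSpace ℝ (Fin n)) := X ∩ {x | f x ≤ f x₀} with hS
    have hSne : S.Nonempty := ⟨x₀, hx₀X, le_refl (f x₀)⟩
    have hScl : IsClosed S := hXcl.inter (hcl (f x₀))
    have hSbd : Bornology.IsBounded S := by
      by_contra hSb
      rw [isBounded_iff_forall_norm_le] at hSb
      push_neg at hSb
      have hx : ∀ k : ℕ, ∃ z ∈ S, (k:ℝ) < ‖z‖ := fun k => hSb k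
      choose x hxS hxn using hx
      obtain ⟨d, hdn, hdc, hdf⟩ := unbounded_dir (f := f) (X := X) (α := r₀) x
        (fun k => (hxS k).1) (fun k => by rw [← hr₀]; exact (hxS k).2) hxn
      have hd : d ∈ asympCone X ∩ {d | asympFun f d ≤ 0} := ⟨hdc, hdf⟩
      rw [hlhs, Set.mem_singleton_iff] at hd
      rw [hd, norm_zero] at hdn
      norm_num at hdn
    have hScomp : IsCompact S := Metric.isCompact_of_isClosed_isBounded hScl hSbd
    obtain ⟨xs, hxsS, hxsmin⟩ := lsc_min hlsc hScomp hSne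
    have hxsarg : xs ∈ {x ∈ X | ∀ y ∈ X, f x ≤ f y} := by
      refine ⟨hxsS.1, fun y hy => ?_⟩
      rcases le_total (f y) (f x₀) with hy0 | hy0
      · exact hxsmin y ⟨hy, hy0⟩
      · exact (hxsmin x₀ ⟨hx₀X, le_refl (f x₀)⟩).trans hy0
    refine ⟨⟨xs, hxsarg⟩, ?_⟩
    have hAeq : {x ∈ X | ∀ y ∈ X, f x ≤ f y}
        = X ∩ ⋂ y ∈ X, {x | f x ≤ f y} := by
      ext z
      simp only [Set.mem_inter_iff, Set.mem_iInter, Set.mem_setOf_eq, Set.mem_sep_iff]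
    have hAcl : IsClosed {x ∈ X | ∀ y ∈ X, f x ≤ f y} := by
      rw [hAeq]
      exact hXcl.inter (isClosed_biInter fun y _ => hcl (f y))
    refine hScomp.of_isClosed_subset hAcl ?_
    exact fun a ha => ⟨ha.1, ha.2 x₀ hx₀X⟩
  · -- backward direction
    rintro ⟨⟨xs, hxsX, hxsmin⟩, hcomp⟩
    ext d
    simp only [Set.mem_inter_iff, Set.mem_setOf_eq, Set.mem_singleton_iff]
    constructor
    · rintro ⟨hdc, hdf⟩
      by_contra hd0
      have hdpos : (0:ℝ) < ‖d‖ := norm_pos_iff.2 hd0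
      obtain ⟨R, hR⟩ := isBounded_iff_forall_norm_le.1 hcomp.isBounded
      obtain ⟨m, hm⟩ := exists_nat_gt ((R + ‖xs‖) / ‖d‖)
      set s : ℝ := (m:ℝ) + 1 with hsdef
      have hspos : (0:ℝ) < s := by positivity
      have hsgt : (R + ‖xs‖) / ‖d‖ < s := by
        rw [hsdef]; linarith
      set p := xs + s • d with hp
      have hpX : p ∈ X := ray_mem hXcl hXconv hxsX hdc hspos
      have hpf : f p ≤ f xs := decrease hconv hlsc hproper.1 hdf xs hspos
      have hparg : p ∈ {x ∈ X | ∀ y ∈ X, f x ≤ f y} :=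
        ⟨hpX, fun y hy => hpf.trans (hxsmin y hy)⟩
      have hpR : ‖p‖ ≤ R := hR p hparg
      have h1 : s * ‖d‖ = ‖p - xs‖ := by
        rw [hp, add_sub_cancel_left, norm_smul, Real.norm_eq_abs, abs_of_pos hspos]
      have h2 : ‖p - xs‖ ≤ ‖p‖ + ‖xs‖ := norm_sub_le p xs
      have h3 : R + ‖xs‖ < s * ‖d‖ := (div_lt_iff₀ hdpos).1 hsgt
      linarith
    · intro h
      subst h
      exact ⟨zero_mem_cone hne, asympFun_zero_le hr₀⟩
end
end

section
/- Let f(x) = ⟨c, x⟩ + β be an affine function on ℝⁿ and X ⊆ ℝⁿ closed convex with f bounded from below on X. If there exist sequences xₖ ∈ X with ‖xₖ‖ → ∞ and x*ₖ in the normal cone N_X(xₖ) with x*ₖ → −c, and xₖ/‖xₖ‖ → v, then v ∈ X^∞, ‖v‖ = 1, and ⟨c, v⟩ ≤ 0, so that X^∞ ∩ {d : ⟨c, d⟩ ≤ 0} ≠ {0}. -/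
open Filter Topology Metric Set RealInnerProductSpace

noncomputable section

variable {E : Type*} [NormedAddCommGroup E] [InnerProductSpace ℝ E]

theorem stmt7 {n : ℕ} (c : EuclideanSpace ℝ (Fin n)) (β : ℝ)
    (X : Set (EuclideanSpace ℝ (Fin n)))
    (hXcl : IsClosed X) (hXconv : Convex ℝ X)
    (hbd : ∃ m : ℝ, ∀ x ∈ X, m ≤ (inner ℝ c (x) : ℝ) + β)
    (xk : ℕ → EuclideanSpace ℝ (Fin n)) (hxk : ∀ k, xk k ∈ X)
    (hnorm : Tendsto (fun k => ‖xk k‖) atTop atTop)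
    (xs : ℕ → EuclideanSpace ℝ (Fin n))
    (hxs : ∀ k, ∀ y ∈ X, (inner ℝ (xs k) (y - xk k) : ℝ) ≤ 0)
    (hxsc : Tendsto xs atTop (𝓝 (-c)))
    (v : EuclideanSpace ℝ (Fin n))
    (hvlim : Tendsto (fun k => ‖xk k‖⁻¹ • xk k) atTop (𝓝 v)) :
    v ∈ asympCone X ∧ ‖v‖ = 1 ∧ (inner ℝ c (v) : ℝ) ≤ 0 ∧
      asympCone X ∩ {d | (inner ℝ c (d) : ℝ) ≤ 0} ≠ {0} := by
  have hmem : v ∈ asympCone X := ⟨fun k => ‖xk k‖, xk, hnorm, hxk, hvlim⟩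
  -- norm one
  have hev : ∀ᶠ k in atTop, (1:ℝ) ≤ ‖xk k‖ := hnorm.eventually_ge_atTop 1
  have hnv : ‖v‖ = 1 := by
    have h1 : Tendsto (fun k => ‖(‖xk k‖⁻¹ • xk k : EuclideanSpace ℝ (Fin n))‖)
        atTop (𝓝 ‖v‖) := hvlim.norm
    have h2 : Tendsto (fun k => ‖(‖xk k‖⁻¹ • xk k : EuclideanSpace ℝ (Fin n))‖)
        atTop (𝓝 1) := by
      refine Tendsto.congr' ?_ tendsto_const_nhds
      filter_upwards [hev] with k hk
      have hk0 : ‖xk k‖ ≠ 0 := by linarith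
      rw [norm_smul, norm_inv, norm_norm, inv_mul_cancel₀ hk0]
    exact tendsto_nhds_unique h1 h2
  -- inner c v ≤ 0
  have hinv0 : Tendsto (fun k => ‖xk k‖⁻¹) atTop (𝓝 0) :=
    tendsto_inv_atTop_zero.comp hnorm
  have h0 : Tendsto (fun k => (‖xk k‖⁻¹ • xk 0 : EuclideanSpace ℝ (Fin n)))
      atTop (𝓝 0) := by
    simpa using hinv0.smul_const (xk 0)
  have hlim : Tendsto (fun k => (inner ℝ (xs k)
      (‖xk k‖⁻¹ • xk k - ‖xk k‖⁻¹ • xk 0) : ℝ)) atTop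
      (𝓝 (inner ℝ (-c) (v - 0) : ℝ)) := hxsc.inner (hvlim.sub h0)
  have hge : (inner ℝ (-c) (v - 0) : ℝ) ≥ 0 := by
    refine ge_of_tendsto hlim ?_
    filter_upwards [hev] with k hk
    have hk0 : (0:ℝ) < ‖xk k‖⁻¹ := by positivity
    have := hxs k (xk 0) (hxk 0)
    have h3 : (0:ℝ) ≤ inner ℝ (xs k) (xk k - xk 0) := by
      rw [inner_sub_right] at this ⊢; linarith
    rw [← smul_sub, real_inner_smul_right]
    positivity
  have hcv : (inner ℝ c (v) : ℝ) ≤ 0 := by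
    rw [sub_zero, inner_neg_left] at hge; linarith
  refine ⟨hmem, hnv, hcv, ?_⟩
  intro h
  have : v ∈ asympCone X ∩ {d | (inner ℝ c (d) : ℝ) ≤ 0} := ⟨hmem, hcv⟩
  rw [h] at this
  simp only [Set.mem_singleton_iff] at this
  rw [this] at hnv
  simp at hnv
end
end

section
/- Let f : ℝⁿ → ℝ ∪ {+∞} be proper lsc, X ⊆ ℝⁿ closed with dom f ∩ X unbounded, and assume X^∞ ∩ {d : f^∞(d) ≤ 0} = {0}. Then there exists ε > 0 such that for all u with ‖u‖ < ε one has X^∞ ∩ {d : (f_u)^∞(d) ≤ 0} = {0}, where f_u(x) = f(x) − ⟨u, x⟩. -/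
open Filter Topology Metric Set RealInnerProductSpace

noncomputable section

variable {E : Type*} [NormedAddCommGroup E] [InnerProductSpace ℝ E]

/-- liminf of `a + c` where `c` is a convergent real sequence. -/
lemma liminf_add_real (a : ℕ → EReal) (c : ℕ → ℝ) (c0 : ℝ)
    (h : Tendsto c atTop (𝓝 c0)) :
    liminf (fun k => a k + ((c k : ℝ) : EReal)) atTop = liminf a atTop + (c0 : EReal) := by
  set v : ℕ → EReal := fun k => ((c k : ℝ) : EReal) with hv_def
  have hv : Tendsto v atTop (𝓝 ((c0 : ℝ) : EReal)) := EReal.tendsto_coe.2 h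
  have hls : limsup v atTop = (c0 : EReal) := hv.limsup_eq
  have hli : liminf v atTop = (c0 : EReal) := hv.liminf_eq
  have h1 : (fun k => a k + v k) = v + a := by funext k; exact add_comm _ _
  have h2 : (fun k => a k + v k) = a + v := rfl
  apply le_antisymm
  · have := EReal.liminf_add_le (f := atTop) (u := v) (v := a)
      (by rw [hls]; exact Or.inl (EReal.coe_ne_bot _))
      (by rw [hls]; exact Or.inl (EReal.coe_ne_top _))
    rw [hls] at this
    calc liminf (fun k => a k + v k) atTop = liminf (v + a) atTop := by rw [h1]
      _ ≤ (c0 : EReal) + liminf a atTop := this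
      _ = liminf a atTop + (c0 : EReal) := add_comm _ _
  · have := EReal.le_liminf_add (f := atTop) (u := a) (v := v)
    rw [hli] at this
    calc liminf a atTop + (c0 : EReal) ≤ liminf (a + v) atTop := this
      _ = liminf (fun k => a k + v k) atTop := by rw [h2]

lemma EReal_mul_sub_real {c b : ℝ} (hc : 0 < c) {a : EReal} (ha : a ≠ ⊥) :
    (c : EReal) * (a - (b : ℝ)) = (c : EReal) * a - ((c * b : ℝ) : EReal) := by
  induction a using EReal.rec with
  | bot => exact absurd rfl ha
  | coe x => norm_cast; ring
  | top =>
      rw [EReal.top_sub_coe, EReal.mul_top_of_pos (by exact_mod_cast hc), EReal.top_sub_coe]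

lemma EReal_sub_real_ne_bot {a : EReal} (ha : a ≠ ⊥) (b : ℝ) : a - (b : EReal) ≠ ⊥ := by
  induction a using EReal.rec with
  | bot => exact absurd rfl ha
  | coe x => rw [← EReal.coe_sub]; exact EReal.coe_ne_bot _
  | top => rw [EReal.top_sub_coe]; exact bot_lt_top.ne'

/-- Order isomorphism: multiplication by a positive real on `EReal`. -/
def ERealMulIso (c : ℝ) (hc : 0 < c) : EReal ≃o EReal where
  toFun x := (c : EReal) * x
  invFun x := x / (c : EReal)
  left_inv x := by
    show (c : EReal) * x / (c : EReal) = x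
    rw [← EReal.mul_div c x c, EReal.mul_div_cancel (EReal.coe_ne_bot c) (EReal.coe_ne_top c)
      (by exact_mod_cast hc.ne')]
  right_inv x := EReal.mul_div_cancel (EReal.coe_ne_bot c) (EReal.coe_ne_top c)
      (by exact_mod_cast hc.ne')
  map_rel_iff' := by
    intro x y
    simp only [Equiv.coe_fn_mk]
    constructor
    · intro h
      have := EReal.div_le_div_right_of_nonneg (c := (c : EReal)) (by exact_mod_cast hc.le : (0 : EReal) ≤ (c : EReal)) h
      rwa [← EReal.mul_div c x c, ← EReal.mul_div c y c,
        EReal.mul_div_cancel (EReal.coe_ne_bot c) (EReal.coe_ne_top c)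
          (by exact_mod_cast hc.ne'),
        EReal.mul_div_cancel (EReal.coe_ne_bot c) (EReal.coe_ne_top c)
          (by exact_mod_cast hc.ne')] at this
    · intro h
      exact mul_le_mul_of_nonneg_left h (by exact_mod_cast hc.le)

lemma asympFun_smul_le (f : E → EReal) {c : ℝ} (hc : 0 < c) (d : E) :
    asympFun f (c • d) ≤ (c : EReal) * asympFun f d := by
  rw [← EReal.div_le_iff_le_mul (by exact_mod_cast hc) (EReal.coe_ne_top c)]
  apply le_sInf
  rintro L ⟨t, dk, ht, hdk, rfl⟩
  rw [EReal.div_le_iff_le_mul (by exact_mod_cast hc) (EReal.coe_ne_top c)]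
  apply sInf_le
  refine ⟨fun k => c⁻¹ * t k, fun k => c • dk k, ht.const_mul_atTop (inv_pos.2 hc),
    hdk.const_smul c, ?_⟩
  have hterm : ∀ k, (((c⁻¹ * t k)⁻¹ : ℝ) : EReal) * f ((c⁻¹ * t k) • c • dk k)
      = (c : EReal) * ((((t k)⁻¹ : ℝ) : EReal) * f (t k • dk k)) := by
    intro k
    have h1 : (c⁻¹ * t k) • (c • dk k) = t k • dk k := by
      rw [smul_smul]; congr 1; field_simp
    have h2 : (c⁻¹ * t k)⁻¹ = c * (t k)⁻¹ := by
      rw [mul_inv_rev, inv_inv, mul_comm]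
    rw [h1, h2, EReal.coe_mul, mul_assoc]
  have := (ERealMulIso c hc).liminf_apply
    (u := fun k => (((t k)⁻¹ : ℝ) : EReal) * f (t k • dk k)) (f := atTop)
  simp only [ERealMulIso, RelIso.coe_fn_mk, Equiv.coe_fn_mk] at this
  rw [this]
  exact liminf_congr (Eventually.of_forall fun k => (hterm k).symm)

lemma asympFun_sub_inner_le (f : E → EReal) (hf : ∀ x, f x ≠ ⊥) (u d : E) :
    asympFun (fun x => f x - ((inner ℝ u x : ℝ) : EReal)) d
      ≤ asympFun f d - ((inner ℝ u d : ℝ) : EReal) := by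
  refine (EReal.le_sub_iff_add_le (Or.inl (EReal.coe_ne_bot _))
    (Or.inl (EReal.coe_ne_top _))).2 (le_sInf ?_)
  rintro L ⟨t, dk, ht, hdk, rfl⟩
  refine (EReal.le_sub_iff_add_le (Or.inl (EReal.coe_ne_bot _))
    (Or.inl (EReal.coe_ne_top _))).1 ?_
  refine sInf_le ⟨t, dk, ht, hdk, ?_⟩
  have hcongr : ∀ᶠ k in atTop,
      (((t k)⁻¹ : ℝ) : EReal) * ((fun x => f x - ((inner ℝ u x : ℝ) : EReal)) (t k • dk k))
      = (fun k => (((t k)⁻¹ : ℝ) : EReal) * f (t k • dk k)) k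
          + (((- (inner ℝ u (dk k) : ℝ)) : ℝ) : EReal) := by
    filter_upwards [ht.eventually_gt_atTop 0] with k hk
    have hinner : (inner ℝ u (t k • dk k) : ℝ) = t k * (inner ℝ u (dk k) : ℝ) :=
      real_inner_smul_right u (dk k) (t k)
    rw [hinner, EReal_mul_sub_real (inv_pos.2 hk) (hf _),
      inv_mul_cancel_left₀ hk.ne', EReal.coe_neg, sub_eq_add_neg]
  have htend : Tendsto (fun k => -(inner ℝ u (dk k) : ℝ)) atTop (𝓝 (-(inner ℝ u d : ℝ))) :=
    (Filter.Tendsto.inner tendsto_const_nhds hdk).neg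
  rw [liminf_congr hcongr,
    liminf_add_real (fun k => (((t k)⁻¹ : ℝ) : EReal) * f (t k • dk k))
      (fun k => -(inner ℝ u (dk k) : ℝ)) (-(inner ℝ u d : ℝ)) htend,
    EReal.coe_neg, sub_eq_add_neg]

lemma le_asympFun_add_inner (f : E → EReal) (hf : ∀ x, f x ≠ ⊥) (u d : E) :
    asympFun f d
      ≤ asympFun (fun x => f x - ((inner ℝ u x : ℝ) : EReal)) d + ((inner ℝ u d : ℝ) : EReal) := by
  have key := asympFun_sub_inner_le (fun x => f x - ((inner ℝ u x : ℝ) : EReal))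
    (fun x => EReal_sub_real_ne_bot (hf x) _) (-u) d
  have hfun : (fun x => (f x - ((inner ℝ u x : ℝ) : EReal)) - ((inner ℝ (-u) x : ℝ) : EReal))
      = f := by
    funext x
    rw [inner_neg_left]
    push_cast
    rw [sub_eq_add_neg, sub_eq_add_neg, neg_neg, add_assoc, ← EReal.coe_neg, ← EReal.coe_add,
      neg_add_cancel, EReal.coe_zero, add_zero]
  rw [hfun, inner_neg_left] at key
  push_cast at key
  rw [sub_eq_add_neg, neg_neg] at key
  exact key

lemma asympFun_limit_le_zero (f : E → EReal) {e : E} {ek : ℕ → E}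
    (hek : Tendsto ek atTop (𝓝 e))
    (h : ∀ k : ℕ, asympFun f (ek k) < ((1 / (k + 1) : ℝ) : EReal)) :
    asympFun f e ≤ 0 := by
  have H : ∀ k : ℕ, ∃ (T : ℝ) (D : E), ((k : ℝ) + 1) ≤ T ∧ dist D (ek k) < 1 / (k + 1) ∧
      ((T⁻¹ : ℝ) : EReal) * f (T • D) < ((1 / (k + 1) : ℝ) : EReal) := by
    intro k
    obtain ⟨L, hL, hLlt⟩ := sInf_lt_iff.1 (h k)
    obtain ⟨t, dk, ht, hdk, rfl⟩ := hL
    have hfreq : ∃ᶠ m in atTop,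
        (((t m)⁻¹ : ℝ) : EReal) * f (t m • dk m) < ((1 / (k + 1) : ℝ) : EReal) :=
      frequently_lt_of_liminf_lt (by isBoundedDefault) hLlt
    have hev : ∀ᶠ m in atTop, ((k : ℝ) + 1) ≤ t m ∧ dist (dk m) (ek k) < 1 / (k + 1) :=
      (ht.eventually_ge_atTop _).and
        (Metric.tendsto_nhds.1 hdk _ (by positivity))
    obtain ⟨m, hm1, hm2, hm3⟩ := (hfreq.and_eventually hev).exists
    exact ⟨t m, dk m, hm2, hm3, hm1⟩
  choose T D hT hD hval using H
  have hTtop : Tendsto T atTop atTop :=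
    tendsto_atTop_mono hT (tendsto_atTop_add_const_right _ 1 tendsto_natCast_atTop_atTop)
  have hone : Tendsto (fun k : ℕ => 1 / ((k : ℝ) + 1)) atTop (𝓝 0) :=
    tendsto_one_div_add_atTop_nhds_zero_nat
  have hDtend : Tendsto D atTop (𝓝 e) := by
    rw [tendsto_iff_dist_tendsto_zero]
    apply squeeze_zero (fun k => dist_nonneg)
      (g := fun k : ℕ => 1 / ((k : ℝ) + 1) + dist (ek k) e)
    · intro k
      exact (dist_triangle (D k) (ek k) e).trans (by linarith [hD k])
    · simpa using hone.add (tendsto_iff_dist_tendsto_zero.1 hek)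
  have hmem : asympFun f e ≤ liminf (fun k => (((T k)⁻¹ : ℝ) : EReal) * f (T k • D k)) atTop :=
    sInf_le ⟨T, D, hTtop, hDtend, rfl⟩
  refine hmem.trans ?_
  have hle : liminf (fun k => (((T k)⁻¹ : ℝ) : EReal) * f (T k • D k)) atTop
      ≤ liminf (fun k : ℕ => ((1 / ((k : ℝ) + 1) : ℝ) : EReal)) atTop :=
    liminf_le_liminf (Eventually.of_forall fun k => (hval k).le)
  refine hle.trans_eq ?_
  have : Tendsto (fun k : ℕ => ((1 / ((k : ℝ) + 1) : ℝ) : EReal)) atTop (𝓝 ((0 : ℝ) : EReal)) :=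
    EReal.tendsto_coe.2 hone
  rw [this.liminf_eq, EReal.coe_zero]

lemma asympCone_smul {X : Set E} {d : E} (hd : d ∈ asympCone X) {c : ℝ} (hc : 0 < c) :
    c • d ∈ asympCone X := by
  obtain ⟨t, x, ht, hx, hlim⟩ := hd
  refine ⟨fun k => c⁻¹ * t k, x, ht.const_mul_atTop (inv_pos.2 hc), hx, ?_⟩
  have : ∀ k, (c⁻¹ * t k)⁻¹ • x k = c • ((t k)⁻¹ • x k) := by
    intro k
    rw [mul_inv_rev, inv_inv, smul_smul, mul_comm]
  exact Tendsto.congr (fun k => (this k).symm) (hlim.const_smul c)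

lemma asympCone_mem_of_tendsto {X : Set E} {e : E} {ej : ℕ → E}
    (h : ∀ j, ej j ∈ asympCone X) (hej : Tendsto ej atTop (𝓝 e)) :
    e ∈ asympCone X := by
  have H : ∀ j : ℕ, ∃ (T : ℝ) (Y : E), Y ∈ X ∧ ((j : ℝ) + 1) ≤ T ∧
      dist (T⁻¹ • Y) (ej j) < 1 / (j + 1) := by
    intro j
    obtain ⟨t, x, ht, hx, hlim⟩ := h j
    have hev : ∀ᶠ m in atTop, ((j : ℝ) + 1) ≤ t m ∧ dist ((t m)⁻¹ • x m) (ej j) < 1 / (j + 1) :=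
      (ht.eventually_ge_atTop _).and (Metric.tendsto_nhds.1 hlim _ (by positivity))
    obtain ⟨m, hm1, hm2⟩ := hev.exists
    exact ⟨t m, x m, hx m, hm1, hm2⟩
  choose T Y hY hT hD using H
  refine ⟨T, Y, tendsto_atTop_mono hT
    (tendsto_atTop_add_const_right _ 1 tendsto_natCast_atTop_atTop), hY, ?_⟩
  rw [tendsto_iff_dist_tendsto_zero]
  apply squeeze_zero (fun k => dist_nonneg)
    (g := fun j : ℕ => 1 / ((j : ℝ) + 1) + dist (ej j) e)
  · intro j
    exact (dist_triangle ((T j)⁻¹ • Y j) (ej j) e).trans (by linarith [hD j])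
  · simpa using tendsto_one_div_add_atTop_nhds_zero_nat.add
      (tendsto_iff_dist_tendsto_zero.1 hej)

theorem stmt9 {n : ℕ} (f : EuclideanSpace ℝ (Fin n) → EReal)
    (X : Set (EuclideanSpace ℝ (Fin n)))
    (hproper : ERealProper f) (hlsc : LowerSemicontinuous f) (hX : IsClosed X)
    (hunb : ¬ Bornology.IsBounded ({x | f x ≠ ⊤} ∩ X))
    (hcone : asympCone X ∩ {d | asympFun f d ≤ 0} = {0}) :
    ∃ ε > (0:ℝ), ∀ u : EuclideanSpace ℝ (Fin n), ‖u‖ < ε →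
      asympCone X ∩
        {d | asympFun (fun x => f x - ((inner ℝ u x : ℝ) : EReal)) d ≤ 0} = {0} := by
  obtain ⟨hfbot, -⟩ := hproper
  have key : ∃ ε > (0:ℝ), ∀ e, e ∈ asympCone X → ‖e‖ = 1 →
      ((ε : ℝ) : EReal) ≤ asympFun f e := by
    by_contra hcon
    push_neg at hcon
    have H : ∀ k : ℕ, ∃ e, e ∈ asympCone X ∧ ‖e‖ = 1 ∧
        asympFun f e < ((1 / (k + 1) : ℝ) : EReal) := by
      intro k
      obtain ⟨e, he1, he2, he3⟩ := hcon (1 / ((k : ℝ) + 1)) (by positivity)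
      exact ⟨e, he1, he2, he3⟩
    choose e he hnorm hval using H
    obtain ⟨a, haS, φ, hφ, hconv⟩ :=
      (isCompact_sphere (0 : EuclideanSpace ℝ (Fin n)) 1).tendsto_subseq
        (fun k => (mem_sphere_zero_iff_norm).2 (hnorm k))
    have haX : a ∈ asympCone X := asympCone_mem_of_tendsto (fun j => he (φ j)) hconv
    have hval' : ∀ k : ℕ, asympFun f ((e ∘ φ) k) < ((1 / (k + 1) : ℝ) : EReal) := by
      intro k
      refine (hval (φ k)).trans_le ?_
      rw [EReal.coe_le_coe_iff]
      have h1 : (k : ℝ) + 1 ≤ (φ k : ℝ) + 1 := by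
        have := hφ.le_apply (x := k)
        have : (k : ℝ) ≤ (φ k : ℝ) := by exact_mod_cast this
        linarith
      exact one_div_le_one_div_of_le (by positivity) h1
    have hle : asympFun f a ≤ 0 := asympFun_limit_le_zero f hconv hval'
    have hmem : a ∈ asympCone X ∩ {d | asympFun f d ≤ 0} := ⟨haX, hle⟩
    rw [hcone, mem_singleton_iff] at hmem
    have hns : ‖a‖ = 1 := mem_sphere_zero_iff_norm.1 haS
    rw [hmem] at hns
    simp at hns
  obtain ⟨ε, hε, hkey⟩ := key
  refine ⟨ε, hε, fun u hu => ?_⟩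
  apply Set.eq_of_subset_of_subset
  · rintro d ⟨hdX, hdval⟩
    simp only [mem_setOf_eq] at hdval
    rw [mem_singleton_iff]
    by_contra hd0
    have hdn : (0:ℝ) < ‖d‖ := norm_pos_iff.2 hd0
    set c : ℝ := ‖d‖⁻¹ with hc_def
    have hc : 0 < c := inv_pos.2 hdn
    have hce : c • d ∈ asympCone X := asympCone_smul hdX hc
    have hnorm1 : ‖c • d‖ = 1 := by
      rw [norm_smul, Real.norm_eq_abs, abs_of_pos hc, inv_mul_cancel₀ hdn.ne']
    have h1 : ((ε : ℝ) : EReal) ≤ asympFun f (c • d) := hkey _ hce hnorm1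
    have h2 : asympFun f (c • d) ≤ (c : EReal) * asympFun f d := asympFun_smul_le f hc d
    have h3 : asympFun f d ≤ ((inner ℝ u d : ℝ) : EReal) := by
      refine (le_asympFun_add_inner f hfbot u d).trans ?_
      calc asympFun (fun x => f x - ((inner ℝ u x : ℝ) : EReal)) d + ((inner ℝ u d : ℝ) : EReal)
          ≤ 0 + ((inner ℝ u d : ℝ) : EReal) := add_le_add_left hdval _
        _ = _ := zero_add _
    have h4 : (c : EReal) * asympFun f d ≤ ((c * (inner ℝ u d : ℝ) : ℝ) : EReal) := by
      rw [EReal.coe_mul]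
      exact mul_le_mul_of_nonneg_left h3 (by exact_mod_cast hc.le)
    have h5 : c * (inner ℝ u d : ℝ) < ε := by
      have hineq : (inner ℝ u d : ℝ) ≤ ‖u‖ * ‖d‖ := real_inner_le_norm u d
      have hb : c * (inner ℝ u d : ℝ) ≤ ‖u‖ := by
        calc c * (inner ℝ u d : ℝ) ≤ c * (‖u‖ * ‖d‖) := mul_le_mul_of_nonneg_left hineq hc.le
          _ = ‖u‖ * (c * ‖d‖) := by ring
          _ = ‖u‖ := by rw [hc_def, inv_mul_cancel₀ hdn.ne', mul_one]
      linarith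
    have hfin : ((ε : ℝ) : EReal) ≤ ((c * (inner ℝ u d : ℝ) : ℝ) : EReal) :=
      h1.trans (h2.trans h4)
    rw [EReal.coe_le_coe_iff] at hfin
    linarith
  · intro d hd
    rw [mem_singleton_iff] at hd
    subst hd
    have h0 : (0 : EuclideanSpace ℝ (Fin n)) ∈ asympCone X ∩ {d | asympFun f d ≤ 0} := by
      rw [hcone]; exact mem_singleton _
    refine ⟨h0.1, ?_⟩
    simp only [mem_setOf_eq]
    have hkey0 := asympFun_sub_inner_le f hfbot u 0
    rw [inner_zero_right] at hkey0
    refine hkey0.trans ?_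
    rw [EReal.coe_zero, sub_eq_add_neg, neg_zero, add_zero]
    exact h0.2
end
end

section
/- Let f : ℝⁿ → ℝ ∪ {+∞} be proper lsc, X ⊆ ℝⁿ closed with dom f ∩ X unbounded, and assume X^∞ ∩ {d : f^∞(d) ≤ 0} = {0}. Then the solution map u ↦ Sol(u) := argmin_{x∈X}(f(x) − ⟨u,x⟩) is upper semicontinuous at 0: for every open V ⊇ Sol(0) there is δ > 0 such that Sol(u) ⊆ V whenever ‖u‖ < δ. -/
open Filter Topology Metric Set RealInnerProductSpace

noncomputable section

variable {E : Type*} [NormedAddCommGroup E] [InnerProductSpace ℝ E]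

set_option linter.unusedSectionVars false

lemma lsc_le_liminf_seq {f : E → EReal} (hf : LowerSemicontinuous f) {x : ℕ → E} {a : E}
    (hx : Tendsto x atTop (𝓝 a)) : f a ≤ liminf (fun k => f (x k)) atTop := by
  refine le_of_forall_lt_imp_le_of_dense fun c hc => ?_
  exact le_liminf_of_le (by isBoundedDefault)
    ((hx.eventually (hf a c hc)).mono fun k h => h.le)

lemma coe_liminf_eq {g : ℕ → ℝ} {r : ℝ} (h : Tendsto g atTop (𝓝 r)) :
    liminf (fun k => ((g k : EReal))) atTop = (r : EReal) :=
  ((continuous_coe_real_ereal.tendsto r).comp h).liminf_eq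

/-- key bound from Sol membership -/
lemma sol_bound {f : E → EReal} {X : Set E} {u z : E} (hz : z ∈ Sol f X u)
    {y : E} (hy : y ∈ X) {s : ℝ} (hs : f y = (s : EReal)) :
    f z ≤ (((s + ((inner ℝ u z : ℝ) - (inner ℝ u y : ℝ))) : ℝ) : EReal) := by
  have h := hz.2 y hy
  rw [hs, ← EReal.coe_sub] at h
  have h2 := (EReal.sub_le_iff_le_add (c := ((s - (inner ℝ u y : ℝ) : ℝ) : EReal))
    (b := ((inner ℝ u z : ℝ) : EReal)) (Or.inl (EReal.coe_ne_bot _))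
    (Or.inl (EReal.coe_ne_top _))).1 h
  rw [← EReal.coe_add] at h2
  convert h2 using 2
  ring

theorem stmt11 {n : ℕ} (f : EuclideanSpace ℝ (Fin n) → EReal)
    (X : Set (EuclideanSpace ℝ (Fin n)))
    (hproper : ERealProper f) (hlsc : LowerSemicontinuous f) (hX : IsClosed X)
    (hunb : ¬ Bornology.IsBounded ({x | f x ≠ ⊤} ∩ X))
    (hcone : asympCone X ∩ {d | asympFun f d ≤ 0} = {0}) :
    ∀ V : Set (EuclideanSpace ℝ (Fin n)), IsOpen V → Sol f X 0 ⊆ V →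
      ∃ δ > (0:ℝ), ∀ u : EuclideanSpace ℝ (Fin n), ‖u‖ < δ → Sol f X u ⊆ V := by
  intro V hV hSV
  by_contra hcon
  push_neg at hcon
  have H : ∀ k : ℕ, ∃ u x, ‖u‖ < 1/(k+1 : ℝ) ∧ x ∈ Sol f X u ∧ x ∉ V := by
    intro k
    obtain ⟨u, hu, hns⟩ := hcon (1/(k+1 : ℝ)) (by positivity)
    rw [Set.not_subset] at hns
    obtain ⟨x, hx, hxV⟩ := hns
    exact ⟨u, x, hu, hx, hxV⟩
  choose u x hu hxSol hxV using H
  have hu0 : Tendsto u atTop (𝓝 0) := by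
    rw [tendsto_zero_iff_norm_tendsto_zero]
    exact squeeze_zero (fun k => norm_nonneg _) (fun k => (hu k).le)
      tendsto_one_div_add_atTop_nhds_zero_nat
  -- pick a point in dom f ∩ X
  have hne : ({x | f x ≠ ⊤} ∩ X).Nonempty := by
    rw [Set.nonempty_iff_ne_empty]
    intro h
    exact hunb (h ▸ Bornology.isBounded_empty)
  obtain ⟨y0, hy0f, hy0X⟩ := hne
  set r : ℝ := (f y0).toReal with hr_def
  have hr : f y0 = (r : EReal) := (EReal.coe_toReal hy0f (hproper.1 y0)).symm
  by_cases hT : Tendsto (fun k => ‖x k‖) atTop atTop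
  · -- unbounded case
    set t : ℕ → ℝ := fun k => ‖x k‖ with ht_def
    set d : ℕ → EuclideanSpace ℝ (Fin n) := fun k => (t k)⁻¹ • x k with hd_def
    have hd_ball : ∀ k, d k ∈ closedBall (0 : EuclideanSpace ℝ (Fin n)) 1 := by
      intro k
      rw [mem_closedBall_zero_iff]
      rcases eq_or_ne (x k) 0 with h | h
      · simp [hd_def, h]
      · have : ‖x k‖ ≠ 0 := norm_ne_zero_iff.2 h
        rw [hd_def]
        simp only [norm_smul, norm_inv, norm_norm, ht_def]
        rw [inv_mul_cancel₀ this]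
    obtain ⟨dbar, -, φ, hφ, hdφ⟩ :=
      (isCompact_closedBall (0 : EuclideanSpace ℝ (Fin n)) 1).tendsto_subseq hd_ball
    have hφ' : Tendsto (fun k => t (φ k)) atTop atTop := hT.comp hφ.tendsto_atTop
    have hevpos : ∀ᶠ k in atTop, 0 < t (φ k) := hφ'.eventually_gt_atTop 0
    have hdnorm : ‖dbar‖ = 1 := by
      have h1 : Tendsto (fun k => ‖d (φ k)‖) atTop (𝓝 ‖dbar‖) :=
        (continuous_norm.tendsto dbar).comp hdφ
      have h2 : ∀ᶠ k in atTop, ‖d (φ k)‖ = 1 := by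
        filter_upwards [hevpos] with k hk
        have : ‖x (φ k)‖ ≠ 0 := ne_of_gt hk
        simp only [hd_def, norm_smul, norm_inv, norm_norm, ht_def]
        rw [inv_mul_cancel₀ this]
      exact tendsto_nhds_unique (h1.congr' h2) tendsto_const_nhds
    have hdcone : dbar ∈ asympCone X :=
      ⟨fun k => t (φ k), fun k => x (φ k), hφ', fun k => (hxSol (φ k)).1, hdφ⟩
    -- show asympFun f dbar ≤ 0
    have hL : asympFun f dbar ≤
        liminf (fun k => (((t (φ k))⁻¹ : ℝ) : EReal) * f (t (φ k) • d (φ k))) atTop :=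
      sInf_le ⟨fun k => t (φ k), fun k => d (φ k), hφ', hdφ, rfl⟩
    -- the real bound sequence
    set e : ℕ → ℝ := fun k => (inner ℝ (u k) (x k) : ℝ) - (inner ℝ (u k) y0 : ℝ) with he_def
    set g : ℕ → ℝ := fun k => (t (φ k))⁻¹ * (r + e (φ k)) with hg_def
    have hg0 : Tendsto g atTop (𝓝 0) := by
      have hA : Tendsto (fun k => (t (φ k))⁻¹) atTop (𝓝 0) :=
        hφ'.inv_tendsto_atTop
      have hA' : Tendsto (fun k => (t (φ k))⁻¹ * r) atTop (𝓝 0) := by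
        simpa using hA.mul_const r
      have hB : Tendsto (fun k => (t (φ k))⁻¹ * (inner ℝ (u (φ k)) (x (φ k)) : ℝ)) atTop (𝓝 0) := by
        apply squeeze_zero_norm' (a := fun k => ‖u (φ k)‖)
        · filter_upwards [hevpos] with k hk
          have hxk : ‖x (φ k)‖ ≠ 0 := ne_of_gt hk
          rw [Real.norm_eq_abs, abs_mul, abs_inv]
          have h1 : |(inner ℝ (u (φ k)) (x (φ k)) : ℝ)| ≤ ‖u (φ k)‖ * ‖x (φ k)‖ :=
            abs_real_inner_le_norm _ _
          have h2 : |t (φ k)| = ‖x (φ k)‖ := abs_of_pos hk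
          rw [h2]
          calc ‖x (φ k)‖⁻¹ * |(inner ℝ (u (φ k)) (x (φ k)) : ℝ)|
              ≤ ‖x (φ k)‖⁻¹ * (‖u (φ k)‖ * ‖x (φ k)‖) := by
                apply mul_le_mul_of_nonneg_left h1 (by positivity)
            _ = ‖u (φ k)‖ := by field_simp
        · exact (tendsto_norm_zero.comp hu0).comp hφ.tendsto_atTop
      have hC : Tendsto (fun k => (t (φ k))⁻¹ * (inner ℝ (u (φ k)) y0 : ℝ)) atTop (𝓝 0) := by
        have hin : Tendsto (fun k => (inner ℝ (u (φ k)) y0 : ℝ)) atTop (𝓝 0) := by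
          have := Filter.Tendsto.inner (𝕜 := ℝ) (hu0.comp hφ.tendsto_atTop)
            (tendsto_const_nhds (x := y0))
          simpa using this
        simpa using hA.mul hin
      have := (hA'.add (hB.sub hC))
      simp only [add_zero, sub_zero, zero_add] at this
      apply this.congr
      intro k
      simp only [hg_def, he_def]
      ring
    have hL0 : liminf (fun k => (((t (φ k))⁻¹ : ℝ) : EReal) * f (t (φ k) • d (φ k))) atTop
        ≤ 0 := by
      have hle : ∀ᶠ k in atTop,
          (((t (φ k))⁻¹ : ℝ) : EReal) * f (t (φ k) • d (φ k)) ≤ ((g k : ℝ) : EReal) := by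
        filter_upwards [hevpos] with k hk
        have hxk : t (φ k) ≠ 0 := ne_of_gt hk
        have hsm : t (φ k) • d (φ k) = x (φ k) := by
          rw [hd_def]
          exact smul_inv_smul₀ hxk _
        rw [hsm]
        have hb := sol_bound (hxSol (φ k)) hy0X hr
        calc (((t (φ k))⁻¹ : ℝ) : EReal) * f (x (φ k))
            ≤ (((t (φ k))⁻¹ : ℝ) : EReal) * (((r + e (φ k)) : ℝ) : EReal) :=
              mul_le_mul_of_nonneg_left hb (by exact_mod_cast inv_nonneg.2 hk.le)
          _ = ((g k : ℝ) : EReal) := by rw [← EReal.coe_mul]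
      calc liminf (fun k => (((t (φ k))⁻¹ : ℝ) : EReal) * f (t (φ k) • d (φ k))) atTop
          ≤ liminf (fun k => ((g k : ℝ) : EReal)) atTop := liminf_le_liminf hle
        _ = ((0 : ℝ) : EReal) := coe_liminf_eq hg0
        _ = 0 := by norm_num
    have hdmem : dbar ∈ asympCone X ∩ {d | asympFun f d ≤ 0} := ⟨hdcone, hL.trans hL0⟩
    rw [hcone] at hdmem
    rw [hdmem] at hdnorm
    simp at hdnorm
  · -- bounded case
    rw [Filter.tendsto_atTop] at hT
    push_neg at hT
    obtain ⟨C, hC⟩ := hT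
    have hC' : ∃ᶠ k in atTop, ‖x k‖ ≤ C := hC.mono fun k hk => hk.le
    obtain ⟨φ, hφ, hφC⟩ := extraction_of_frequently_atTop hC'
    have hball : ∀ k, x (φ k) ∈ closedBall (0 : EuclideanSpace ℝ (Fin n)) C := by
      intro k; rw [mem_closedBall_zero_iff]; exact hφC k
    obtain ⟨xbar, -, ψ, hψ, hxψ⟩ :=
      (isCompact_closedBall (0 : EuclideanSpace ℝ (Fin n)) C).tendsto_subseq hball
    set σ : ℕ → ℕ := fun k => φ (ψ k) with hσ_def
    have hσ : StrictMono σ := hφ.comp hψ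
    have hxσ : Tendsto (fun k => x (σ k)) atTop (𝓝 xbar) := hxψ
    have huσ : Tendsto (fun k => u (σ k)) atTop (𝓝 0) := hu0.comp hσ.tendsto_atTop
    have hxbarX : xbar ∈ X :=
      hX.mem_of_tendsto hxσ (Eventually.of_forall fun k => (hxSol (σ k)).1)
    have hxbarV : xbar ∉ V := by
      have : xbar ∈ Vᶜ :=
        hV.isClosed_compl.mem_of_tendsto hxσ (Eventually.of_forall fun k => hxV (σ k))
      exact this
    apply hxbarV
    apply hSV
    refine ⟨hxbarX, ?_⟩
    intro y hy
    have key : f xbar ≤ f y := by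
      rcases eq_or_ne (f y) ⊤ with hfy | hfy
      · rw [hfy]; exact le_top
      · set s : ℝ := (f y).toReal with hs_def
        have hs : f y = (s : EReal) := (EReal.coe_toReal hfy (hproper.1 y)).symm
        have hbound : ∀ k, f (x (σ k)) ≤
            (((s + ((inner ℝ (u (σ k)) (x (σ k)) : ℝ) - (inner ℝ (u (σ k)) y : ℝ))) : ℝ) : EReal) :=
          fun k => sol_bound (hxSol (σ k)) hy hs
        have hlim : Tendsto (fun k =>
            (s + ((inner ℝ (u (σ k)) (x (σ k)) : ℝ) - (inner ℝ (u (σ k)) y : ℝ)))) atTop (𝓝 s) := by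
          have h1 : Tendsto (fun k => (inner ℝ (u (σ k)) (x (σ k)) : ℝ)) atTop (𝓝 0) := by
            have := Filter.Tendsto.inner (𝕜 := ℝ) huσ hxσ
            simpa using this
          have h2 : Tendsto (fun k => (inner ℝ (u (σ k)) y : ℝ)) atTop (𝓝 0) := by
            have := Filter.Tendsto.inner (𝕜 := ℝ) huσ (tendsto_const_nhds (x := y))
            simpa using this
          have := (tendsto_const_nhds (x := s)).add (h1.sub h2)
          simpa using this
        calc f xbar ≤ liminf (fun k => f (x (σ k))) atTop := lsc_le_liminf_seq hlsc hxσ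
          _ ≤ liminf (fun k =>
              (((s + ((inner ℝ (u (σ k)) (x (σ k)) : ℝ) - (inner ℝ (u (σ k)) y : ℝ))) : ℝ) : EReal))
              atTop := liminf_le_liminf (Eventually.of_forall hbound)
          _ = (s : EReal) := coe_liminf_eq hlim
          _ = f y := hs.symm
    have h0x : ((inner ℝ (0 : EuclideanSpace ℝ (Fin n)) xbar : ℝ) : EReal) = 0 := by
      rw [inner_zero_left]; norm_num
    have h0y : ((inner ℝ (0 : EuclideanSpace ℝ (Fin n)) y : ℝ) : EReal) = 0 := by
      rw [inner_zero_left]; norm_num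
    rw [h0x, h0y]
    simpa [sub_eq_add_neg] using key
end
end

section
/- Let X ⊆ ℝⁿ be nonempty closed convex and f : ℝⁿ → ℝ ∪ {+∞} proper lsc convex with dom f ∩ X unbounded. If X^∞ ∩ {d : f^∞(d) ≤ 0} ≠ {0}, then there exists a sequence uₖ → 0 in ℝⁿ such that argmin_{x∈X}(f(x) − ⟨uₖ, x⟩) = ∅ for every k. -/
open Filter Topology Metric Set RealInnerProductSpace

noncomputable section

variable {E : Type*} [NormedAddCommGroup E] [InnerProductSpace ℝ E]

/-- Below any non-bot EReal minus a real there is a real. -/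
lemma aux_exists_lt_sub (a : EReal) (ha : a ≠ ⊥) (b : ℝ) :
    ∃ q : ℝ, (q:EReal) < a - (b:EReal) := by
  have h1 : a - (b:EReal) ≠ ⊥ := by
    induction a using EReal.rec with
    | bot => exact absurd rfl ha
    | coe r => rw [← EReal.coe_sub]; exact EReal.coe_ne_bot _
    | top => rw [EReal.top_sub_coe]; simp
  obtain ⟨q, -, hq⟩ := EReal.exists_between_coe_real (Ne.bot_lt h1)
  exact ⟨q, hq⟩

/-- Recession property of the asymptotic cone of a closed convex set. -/
lemma aux_mem_of_asympCone {X : Set E} (hXcl : IsClosed X) (hXconv : Convex ℝ X)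
    {d : E} (hd : d ∈ asympCone X) {x : E} (hx : x ∈ X) {s : ℝ} (hs : 0 ≤ s) :
    x + s • d ∈ X := by
  obtain ⟨t, xs, ht, hxs, hlim⟩ := hd
  have hinv : Tendsto (fun k => (t k)⁻¹) atTop (𝓝 0) := tendsto_inv_atTop_zero.comp ht
  set p : ℕ → E := fun k => (1 - s * (t k)⁻¹) • x + s • ((t k)⁻¹ • xs k) with hp
  have hptend : Tendsto p atTop (𝓝 (x + s • d)) := by
    have h1 : Tendsto (fun k => (1 - s * (t k)⁻¹ : ℝ)) atTop (𝓝 1) := by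
      have := (hinv.const_mul s).const_sub 1
      simpa using this
    have h2 : Tendsto (fun k => (1 - s * (t k)⁻¹) • x) atTop (𝓝 ((1:ℝ) • x)) :=
      h1.smul_const x
    have h3 : Tendsto (fun k => s • ((t k)⁻¹ • xs k)) atTop (𝓝 (s • d)) :=
      hlim.const_smul s
    simpa using h2.add h3
  apply hXcl.mem_of_tendsto hptend
  filter_upwards [ht.eventually_ge_atTop (max s 1)] with k hk
  have ht1 : (0:ℝ) < t k := lt_of_lt_of_le one_pos (le_trans (le_max_right s 1) hk)
  have hts : s ≤ t k := le_trans (le_max_left s 1) hk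
  have hl0 : 0 ≤ s * (t k)⁻¹ := mul_nonneg hs (inv_nonneg.2 ht1.le)
  have hl1 : s * (t k)⁻¹ ≤ 1 := by
    rw [← div_eq_mul_inv]
    exact div_le_one_of_le₀ hts ht1.le
  have : (1 - s * (t k)⁻¹) • x + (s * (t k)⁻¹) • xs k ∈ X :=
    hXconv hx (hxs k) (by linarith) hl0 (by ring)
  simpa [mul_smul] using this

/-- Key descent lemma: if the asymptotic function is nonpositive at `d`,
then `f` is nonincreasing along direction `d`. -/
lemma aux_descent {f : E → EReal} (hproper : ERealProper f) (hlsc : LowerSemicontinuous f)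
    (hconv : ERealConvexFn f) {d : E} (hd : asympFun f d ≤ 0)
    {x : E} (hx : f x ≠ ⊤) {s : ℝ} (hs : 0 ≤ s) : f (x + s • d) ≤ f x := by
  rcases eq_or_lt_of_le hs with hs0 | hs0
  · simp [← hs0]
  -- f x is a real number a
  obtain ⟨a, ha⟩ : ∃ a : ℝ, f x = (a : EReal) := by
    rcases hfx : f x with _ | _ | a
    · exact absurd hfx (hproper.1 x)
    · exact absurd hfx hx
    · exact ⟨a, rfl⟩
  rw [ha]
  -- reduce to: ∀ ε > 0, f (x + s • d) ≤ a + ε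
  have main : ∀ ε : ℝ, 0 < ε → f (x + s • d) ≤ ((a + ε : ℝ) : EReal) := by
    intro ε hε
    set ε' : ℝ := ε / (2 * s) with hε'def
    have hε' : 0 < ε' := div_pos hε (by linarith)
    have hlt : asympFun f d < (ε' : EReal) :=
      lt_of_le_of_lt hd (by exact_mod_cast hε')
    obtain ⟨L, hLmem, hLlt⟩ := sInf_lt_iff.mp hlt
    obtain ⟨t, dk, ht, hdk, hLeq⟩ := hLmem
    by_contra hgt
    push_neg at hgt
    have hlsc' := hlsc (x + s • d) _ hgt
    -- the approximating sequence
    set g : ℕ → E := fun k => (1 - s * (t k)⁻¹) • x + s • dk k with hg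
    have hinv : Tendsto (fun k => (t k)⁻¹) atTop (𝓝 0) := tendsto_inv_atTop_zero.comp ht
    have hgtend : Tendsto g atTop (𝓝 (x + s • d)) := by
      have h1 : Tendsto (fun k => (1 - s * (t k)⁻¹ : ℝ)) atTop (𝓝 1) := by
        have := (hinv.const_mul s).const_sub 1
        simpa using this
      have h2 : Tendsto (fun k => (1 - s * (t k)⁻¹) • x) atTop (𝓝 ((1:ℝ) • x)) :=
        h1.smul_const x
      have h3 : Tendsto (fun k => s • dk k) atTop (𝓝 (s • d)) := hdk.const_smul s
      simpa using h2.add h3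
    have hEv1 : ∀ᶠ k in atTop, ((a + ε : ℝ) : EReal) < f (g k) := hgtend.eventually hlsc'
    have hEv2 : ∀ᶠ k in atTop, max s 1 ≤ t k := ht.eventually_ge_atTop (max s 1)
    have hEv3 : ∀ᶠ k in atTop, s * (t k)⁻¹ * |a| < ε / 2 := by
      have : Tendsto (fun k => s * (t k)⁻¹ * |a|) atTop (𝓝 0) := by
        have := (hinv.const_mul s).mul_const |a|
        simpa using this
      exact this.eventually_lt_const (by linarith)
    have hFreq : ∃ᶠ k in atTop,
        (((t k)⁻¹ : ℝ) : EReal) * f (t k • dk k) < (ε' : EReal) :=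
      frequently_lt_of_liminf_lt (by isBoundedDefault) (hLeq ▸ hLlt)
    obtain ⟨k, hk1, hk2, hk3, hk4⟩ := (hFreq.and_eventually (hEv1.and (hEv2.and hEv3))).exists
    -- notation at index k
    have hτpos : (0:ℝ) < t k := lt_of_lt_of_le one_pos (le_trans (le_max_right s 1) hk3)
    have hτs : s ≤ t k := le_trans (le_max_left s 1) hk3
    set y : E := t k • dk k with hy
    -- f y is real
    have hytop : f y ≠ ⊤ := by
      intro hT
      rw [hT] at hk1
      have : (((t k)⁻¹ : ℝ) : EReal) * ⊤ = ⊤ :=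
        EReal.coe_mul_top_of_pos (inv_pos.2 hτpos)
      rw [this] at hk1
      exact not_top_lt hk1
    obtain ⟨r, hr⟩ : ∃ r : ℝ, f y = (r : EReal) := by
      rcases hfy : f y with _ | _ | r
      · exact absurd hfy (hproper.1 y)
      · exact absurd hfy hytop
      · exact ⟨r, rfl⟩
    have hrlt : r < t k * ε' := by
      rw [hr, ← EReal.coe_mul, EReal.coe_lt_coe_iff] at hk1
      have := (mul_lt_mul_iff_right₀ hτpos).2 hk1
      calc r = t k * ((t k)⁻¹ * r) := by field_simp
        _ < t k * ε' := this
    -- convexity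
    set lam : ℝ := s * (t k)⁻¹ with hlam
    have hlam0 : 0 ≤ lam := mul_nonneg hs (inv_nonneg.2 hτpos.le)
    have hlam1 : lam ≤ 1 := by
      rw [hlam, ← div_eq_mul_inv]
      exact div_le_one_of_le₀ hτs hτpos.le
    have hgeq : g k = (1 - lam) • x + lam • y := by
      rw [hg, hy, hlam, smul_smul]
      congr 2
      field_simp
    have hcv := hconv x y (1 - lam) lam (by linarith) hlam0 (by ring)
    rw [← hgeq, ha, hr, ← EReal.coe_mul, ← EReal.coe_mul, ← EReal.coe_add] at hcv
    -- real estimate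
    have hlamτ : lam * t k = s := by
      rw [hlam]
      field_simp
    have hreal : (1 - lam) * a + lam * r ≤ a + ε := by
      have h5 : lam * r ≤ lam * (t k * ε') := by
        rcases eq_or_lt_of_le hlam0 with h | h
        · rw [← h]; simp
        · exact (mul_le_mul_iff_right₀ h).2 hrlt.le
      have h6 : lam * (t k * ε') = ε / 2 := by
        rw [← mul_assoc, hlamτ, hε'def]
        field_simp
      have h7 : -(lam * a) ≤ lam * |a| := by
        rw [← mul_neg]
        exact mul_le_mul_of_nonneg_left (neg_le_abs a) hlam0
      nlinarith [hk4]
    have : f (g k) ≤ ((a + ε : ℝ) : EReal) :=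
      le_trans hcv (by exact_mod_cast hreal)
    exact absurd this (not_le.2 hk2)
  -- conclude
  by_contra hcon
  push_neg at hcon
  obtain ⟨z, hz1, hz2⟩ := EReal.exists_between_coe_real hcon
  have haz : a < z := EReal.coe_lt_coe_iff.1 hz1
  have h := main (z - a) (by linarith)
  rw [show a + (z - a) = z by ring] at h
  exact absurd h (not_le.2 hz2)

theorem stmt12 {n : ℕ} (f : EuclideanSpace ℝ (Fin n) → EReal)
    (X : Set (EuclideanSpace ℝ (Fin n)))
    (hne : X.Nonempty) (hXcl : IsClosed X) (hXconv : Convex ℝ X)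
    (hproper : ERealProper f) (hlsc : LowerSemicontinuous f) (hconv : ERealConvexFn f)
    (hunb : ¬ Bornology.IsBounded ({x | f x ≠ ⊤} ∩ X))
    (hcone : asympCone X ∩ {d | asympFun f d ≤ 0} ≠ {0}) :
    ∃ u : ℕ → EuclideanSpace ℝ (Fin n), Tendsto u atTop (𝓝 0) ∧
      ∀ k : ℕ, Sol f X (u k) = ∅ := by
  -- the feasible domain is nonempty
  obtain ⟨x₀, hx₀f, hx₀X⟩ : ∃ x₀, f x₀ ≠ ⊤ ∧ x₀ ∈ X := by
    by_contra h
    push_neg at h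
    apply hunb
    have hemp : {x | f x ≠ ⊤} ∩ X = ∅ := by
      rw [Set.eq_empty_iff_forall_notMem]
      rintro z ⟨h1, h2⟩
      exact (h z h1) h2
    rw [hemp]
    exact Bornology.isBounded_empty
  obtain ⟨a₀, ha₀⟩ : ∃ a : ℝ, f x₀ = (a : EReal) := by
    rcases hfx : f x₀ with _ | _ | a
    · exact absurd hfx (hproper.1 x₀)
    · exact absurd hfx hx₀f
    · exact ⟨a, rfl⟩
  have htt : Tendsto (fun k : ℕ => ((k:ℝ)+1)) atTop atTop :=
    tendsto_atTop_add_const_right _ 1 tendsto_natCast_atTop_atTop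
  have hti : Tendsto (fun k : ℕ => ((k:ℝ)+1)⁻¹) atTop (𝓝 0) :=
    tendsto_inv_atTop_zero.comp htt
  -- 0 belongs to the asymptotic cone
  have h0cone : (0 : EuclideanSpace ℝ (Fin n)) ∈ asympCone X := by
    refine ⟨fun k => (k:ℝ)+1, fun _ => x₀, htt, fun _ => hx₀X, ?_⟩
    simpa using hti.smul_const x₀
  -- asympFun f 0 ≤ 0
  have h0fun : asympFun f 0 ≤ (0 : EReal) := by
    have hdk : Tendsto (fun k : ℕ => ((k:ℝ)+1)⁻¹ • x₀) atTop
        (𝓝 (0 : EuclideanSpace ℝ (Fin n))) := by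
      simpa using hti.smul_const x₀
    have hmem : liminf (fun k : ℕ =>
        ((((k:ℝ)+1)⁻¹ : ℝ) : EReal) * f (((k:ℝ)+1) • (((k:ℝ)+1)⁻¹ • x₀))) atTop ∈
        {L : EReal | ∃ t : ℕ → ℝ, ∃ dk : ℕ → EuclideanSpace ℝ (Fin n),
          Tendsto t atTop atTop ∧ Tendsto dk atTop (𝓝 0) ∧
          L = liminf (fun k => (((t k)⁻¹ : ℝ) : EReal) * f (t k • dk k)) atTop} :=
      ⟨fun k => (k:ℝ)+1, fun k => ((k:ℝ)+1)⁻¹ • x₀, htt, hdk, rfl⟩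
    have heq : (fun k : ℕ =>
        ((((k:ℝ)+1)⁻¹ : ℝ) : EReal) * f (((k:ℝ)+1) • (((k:ℝ)+1)⁻¹ • x₀))) =
        fun k : ℕ => ((((k:ℝ)+1)⁻¹ * a₀ : ℝ) : EReal) := by
      funext k
      have hk1 : ((k:ℝ)+1) ≠ 0 := by positivity
      rw [smul_smul, mul_inv_cancel₀ hk1, one_smul, ha₀, EReal.coe_mul]
    have hlim0 : Tendsto (fun k : ℕ => ((((k:ℝ)+1)⁻¹ * a₀ : ℝ) : EReal)) atTop
        (𝓝 (0 : EReal)) := by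
      have : Tendsto (fun k : ℕ => ((((k:ℝ)+1)⁻¹ * a₀ : ℝ) : EReal)) atTop
          (𝓝 (((0:ℝ)) : EReal)) := EReal.tendsto_coe.2 (by simpa using hti.mul_const a₀)
      simpa using this
    unfold asympFun
    refine le_trans (sInf_le hmem) ?_
    rw [heq, hlim0.liminf_eq]
  -- pick a nonzero direction
  obtain ⟨d, ⟨hdC, hdF⟩, hd0⟩ :
      ∃ d, d ∈ asympCone X ∩ {d | asympFun f d ≤ 0} ∧ d ≠ 0 := by
    by_contra h
    push_neg at h
    apply hcone
    apply Set.eq_singleton_iff_unique_mem.mpr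
    exact ⟨⟨h0cone, h0fun⟩, h⟩
  have hnd : (0:ℝ) < ‖d‖^2 := by
    have := norm_pos_iff.mpr hd0
    positivity
  refine ⟨fun k => ((k:ℝ)+1)⁻¹ • d, by simpa using hti.smul_const d, ?_⟩
  intro k
  rw [Set.eq_empty_iff_forall_notMem]
  rintro z ⟨hzX, hzmin⟩
  set u : EuclideanSpace ℝ (Fin n) := ((k:ℝ)+1)⁻¹ • d with hu
  -- a real number below the value at z
  obtain ⟨q, hq⟩ := aux_exists_lt_sub (f z) (hproper.1 z) (inner ℝ u z : ℝ)
  set c₀ : ℝ := inner ℝ u x₀ with hc₀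
  set m : ℝ := ((k:ℝ)+1)⁻¹ * ‖d‖^2 with hm
  have hmpos : 0 < m := mul_pos (by positivity) hnd
  set s : ℝ := max 0 ((a₀ - c₀ - q)/m) with hsdef
  have hs0 : (0:ℝ) ≤ s := le_max_left _ _
  have hyX : x₀ + s • d ∈ X := aux_mem_of_asympCone hXcl hXconv hdC hx₀X hs0
  have hfy : f (x₀ + s • d) ≤ f x₀ := aux_descent hproper hlsc hconv hdF hx₀f hs0
  have hip : (inner ℝ u (x₀ + s • d) : ℝ) = c₀ + s * m := by
    simp only [inner_add_right, hc₀, hu, hm, real_inner_smul_right, real_inner_smul_left,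
      real_inner_self_eq_norm_sq]
  have hsm : a₀ - (c₀ + s * m) ≤ q := by
    have h1 : (a₀ - c₀ - q)/m ≤ s := le_max_right _ _
    have h2 := (div_le_iff₀ hmpos).1 h1
    nlinarith
  have hval : f (x₀ + s • d) - ((inner ℝ u (x₀ + s • d) : ℝ) : EReal) ≤ (q:EReal) := by
    calc f (x₀ + s • d) - ((inner ℝ u (x₀ + s • d) : ℝ) : EReal)
        ≤ (a₀ : EReal) - (((c₀ + s * m) : ℝ) : EReal) := by
          rw [hip]
          exact EReal.sub_le_sub (ha₀ ▸ hfy) le_rfl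
      _ = ((a₀ - (c₀ + s * m) : ℝ) : EReal) := (EReal.coe_sub _ _).symm
      _ ≤ (q:EReal) := EReal.coe_le_coe_iff.2 hsm
  exact absurd (le_trans (hzmin _ hyX) hval) (not_le.2 hq)
end
end

section
/- Let f : ℝⁿ → ℝ ∪ {+∞} be proper lsc, X ⊆ ℝⁿ closed with dom f ∩ X unbounded, and suppose X^∞ ∩ {d : f^∞(d) ≤ 0} = {0}. Then the optimal value function μ(u) = inf_{x∈X}(f(x) − ⟨u, x⟩) is lower semicontinuous at 0, hence continuous at 0. -/
open Filter Topology Metric Set RealInnerProductSpace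

noncomputable section

variable {E : Type*} [NormedAddCommGroup E] [InnerProductSpace ℝ E]

-- auxiliary lemmas

lemma aux_finite {a : EReal} (hbot : a ≠ ⊥) {c y : ℝ} (h : a - (c : ℝ) < (y : ℝ)) :
    ∃ r : ℝ, a = (r : ℝ) ∧ r - c < y := by
  have htop : a ≠ ⊤ := by
    intro ht; rw [ht, EReal.top_sub_coe] at h; exact (not_top_lt h)
  refine ⟨a.toReal, (EReal.coe_toReal htop hbot).symm, ?_⟩
  rw [← EReal.coe_toReal htop hbot, ← EReal.coe_sub] at h
  exact_mod_cast h

lemma aux_usc (f : E → EReal) (X : Set E) (hproper : ERealProper f) :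
    UpperSemicontinuousAt (valFn f X) 0 := by
  intro y hy
  simp only [valFn, iInf_lt_iff] at hy
  obtain ⟨x, hxX, hfx⟩ := hy
  simp only [inner_zero_left, EReal.coe_zero, sub_zero] at hfx
  have hbot := hproper.1 x
  have htop : f x ≠ ⊤ := fun ht => by rw [ht] at hfx; exact not_top_lt hfx
  set r := (f x).toReal with hr
  have hfr : f x = (r : ℝ) := (EReal.coe_toReal htop hbot).symm
  rw [hfr] at hfx
  have hcont : Tendsto (fun u : E => (((r - inner ℝ u x : ℝ)) : EReal)) (𝓝 0) (𝓝 ((r : ℝ) : EReal)) := by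
    have h1 : Tendsto (fun u : E => (r - inner ℝ u x : ℝ)) (𝓝 0) (𝓝 r) := by
      have hic : Continuous fun u : E => (inner ℝ u x : ℝ) :=
        continuous_id.inner continuous_const
      have : Tendsto (fun u : E => (inner ℝ u x : ℝ)) (𝓝 0) (𝓝 (0 : ℝ)) := by
        have := hic.tendsto (0 : E)
        simpa using this
      simpa using (tendsto_const_nhds.sub this)
    exact (EReal.continuous_coe_iff.mpr continuous_id).continuousAt.tendsto.comp h1
  filter_upwards [hcont.eventually_lt_const hfx] with u hu
  refine lt_of_le_of_lt ?_ hu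
  calc valFn f X u ≤ f x - ((inner ℝ u x : ℝ) : EReal) := by
        exact iInf₂_le x hxX
    _ = (((r - inner ℝ u x : ℝ)) : EReal) := by rw [hfr, EReal.coe_sub]

lemma aux_lsc {n : ℕ} (f : EuclideanSpace ℝ (Fin n) → EReal)
    (X : Set (EuclideanSpace ℝ (Fin n)))
    (hproper : ERealProper f) (hlsc : LowerSemicontinuous f) (hX : IsClosed X)
    (hcone : asympCone X ∩ {d | asympFun f d ≤ 0} = {0}) :
    LowerSemicontinuousAt (valFn f X) 0 := by
  by_contra hcon
  unfold LowerSemicontinuousAt SemicontinuousAt at hcon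
  push_neg at hcon
  obtain ⟨y, hy, hev⟩ := hcon
  obtain ⟨y', hyy', hy'⟩ := EReal.exists_between_coe_real hy
  -- extract sequence u k → 0 with valFn (u k) ≤ y
  have hseq : ∀ k : ℕ, ∃ u : EuclideanSpace ℝ (Fin n),
      ‖u‖ < 1 / (k + 1) ∧ valFn f X u ≤ y := by
    intro k
    have := (Metric.nhds_basis_ball.frequently_iff).mp hev (1 / (k + 1))
      (by positivity)
    obtain ⟨u, hu1, hu2⟩ := this
    exact ⟨u, by simpa [Metric.mem_ball, dist_zero_right] using hu1, hu2⟩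
  choose u hu hμu using hseq
  -- extract minimizing-ish points x k
  have hxseq : ∀ k : ℕ, ∃ x, x ∈ X ∧ f x - ((inner ℝ (u k) x : ℝ) : EReal) < (y' : EReal) := by
    intro k
    have : valFn f X (u k) < (y' : EReal) := lt_of_le_of_lt (hμu k) hyy'
    simpa only [valFn, iInf_lt_iff, exists_prop] using this
  choose x hxX hxlt using hxseq
  have hreal : ∀ k : ℕ, ∃ r : ℝ, f (x k) = (r : ℝ) ∧ r - inner ℝ (u k) (x k) < y' :=
    fun k => aux_finite (hproper.1 (x k)) (hxlt k)
  choose r hrfx hrlt using hreal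
  by_cases hb : ∃ R : ℝ, ∀ k, ‖x k‖ ≤ R
  · -- bounded case
    obtain ⟨R, hR⟩ := hb
    have hR0 : 0 ≤ R := le_trans (norm_nonneg _) (hR 0)
    obtain ⟨a, -, φ, hφ, htend⟩ := tendsto_subseq_of_bounded
      (isBounded_closedBall (x := (0 : EuclideanSpace ℝ (Fin n))) (r := R))
      (fun k => by simpa [Metric.mem_closedBall, dist_zero_right] using hR k)
    have haX : a ∈ X := hX.mem_of_tendsto htend (Eventually.of_forall fun k => hxX (φ k))
    -- inner products tend to 0
    have hinner : Tendsto (fun k => (inner ℝ (u (φ k)) (x (φ k)) : ℝ)) atTop (𝓝 0) := by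
      apply squeeze_zero_norm (a := fun k : ℕ => (1 / ((k:ℝ) + 1)) * R)
      · intro k
        calc ‖(inner ℝ (u (φ k)) (x (φ k)) : ℝ)‖ ≤ ‖u (φ k)‖ * ‖x (φ k)‖ := norm_inner_le_norm _ _
          _ ≤ (1 / (k + 1)) * R := by
              apply mul_le_mul _ (hR _) (norm_nonneg _) (by positivity)
              refine le_trans (hu (φ k)).le ?_
              apply one_div_le_one_div_of_le (by positivity)
              have h1 : (k : ℝ) ≤ (φ k : ℝ) := Nat.cast_le.mpr hφ.le_apply
              push_cast
              linarith
      · simpa using tendsto_one_div_add_atTop_nhds_zero_nat.mul_const R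
    -- f a ≤ y'
    have hfa : f a ≤ (y' : EReal) := by
      by_contra hcon2
      push_neg at hcon2
      obtain ⟨c, hc1, hc2⟩ := EReal.exists_between_coe_real hcon2
      have h1 : ∀ᶠ k in atTop, (c : EReal) < f (x (φ k)) := htend.eventually (hlsc a _ hc2)
      have h2 : ∀ᶠ k in atTop, (inner ℝ (u (φ k)) (x (φ k)) : ℝ) < c - y' := by
        apply hinner.eventually_lt_const
        exact_mod_cast sub_pos.mpr (EReal.coe_lt_coe_iff.mp hc1)
      obtain ⟨k, hk1, hk2⟩ := (h1.and h2).exists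
      rw [hrfx (φ k)] at hk1
      have hck : c < r (φ k) := EReal.coe_lt_coe_iff.mp hk1
      have := hrlt (φ k)
      linarith
    have : valFn f X 0 ≤ (y' : EReal) := by
      refine le_trans (iInf₂_le a haX) ?_
      simpa using hfa
    exact absurd (lt_of_lt_of_le hy' this) (lt_irrefl _)
  · -- unbounded case
    push_neg at hb
    have hstep : ∀ N : ℕ, ∀ C : ℝ, ∃ j : ℕ, N ≤ j ∧ C < ‖x j‖ := by
      intro N C
      obtain ⟨C0, hC0⟩ := (Set.finite_range fun i : Fin N => ‖x i‖).bddAbove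
      obtain ⟨j, hj⟩ := hb (max C C0)
      refine ⟨j, ?_, lt_of_le_of_lt (le_max_left _ _) hj⟩
      by_contra hjN
      push_neg at hjN
      have : ‖x j‖ ≤ C0 := hC0 ⟨⟨j, hjN⟩, rfl⟩
      exact absurd (lt_of_le_of_lt (le_max_right C C0) hj) (not_lt.mpr this)
    have hpsi : ∀ k : ℕ, ∃ j : ℕ, k ≤ j ∧ ((k : ℝ) + 1) < ‖x j‖ :=
      fun k => hstep k ((k : ℝ) + 1)
    choose ψ hψle hψnorm using hpsi
    set t : ℕ → ℝ := fun k => ‖x (ψ k)‖ with ht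
    have htpos : ∀ k, 0 < t k := fun k => lt_of_lt_of_le (by positivity) (hψnorm k).le
    set d : ℕ → EuclideanSpace ℝ (Fin n) := fun k => (t k)⁻¹ • x (ψ k) with hd
    have hdnorm : ∀ k, ‖d k‖ = 1 := by
      intro k
      have h1 : ‖d k‖ = |(t k)⁻¹| * ‖x (ψ k)‖ := norm_smul _ _
      rw [h1, abs_of_pos (inv_pos.mpr (htpos k))]
      exact inv_mul_cancel₀ (ne_of_gt (htpos k))
    obtain ⟨a, -, φ, hφ, htend⟩ := tendsto_subseq_of_bounded (x := d)
      (isBounded_closedBall (x := (0 : EuclideanSpace ℝ (Fin n))) (r := 1))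
      (fun k => by simpa [Metric.mem_closedBall, dist_zero_right] using (hdnorm k).le)
    have hanorm : ‖a‖ = 1 := by
      have h1 : Tendsto (fun k => ‖(d ∘ φ) k‖) atTop (𝓝 ‖a‖) := htend.norm
      have h2 : Tendsto (fun k => ‖(d ∘ φ) k‖) atTop (𝓝 (1:ℝ)) := by
        have he : (fun k => ‖(d ∘ φ) k‖) = fun _ => (1:ℝ) := funext fun k => hdnorm (φ k)
        rw [he]; exact tendsto_const_nhds
      exact tendsto_nhds_unique h1 h2
    -- t ∘ φ tends to atTop
    have httop : Tendsto (fun k => t (φ k)) atTop atTop := by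
      refine tendsto_atTop_mono (fun k => ?_)
        (tendsto_atTop_add_const_right atTop 1 (tendsto_natCast_atTop_atTop (R := ℝ)))
      have h1 : (k : ℝ) ≤ (φ k : ℝ) := Nat.cast_le.mpr hφ.le_apply
      have := hψnorm (φ k)
      calc (k : ℝ) + 1 ≤ (φ k : ℝ) + 1 := by linarith
        _ ≤ t (φ k) := this.le
    have hsmul : ∀ k, t (φ k) • d (φ k) = x (ψ (φ k)) := by
      intro k
      rw [hd]
      exact smul_inv_smul₀ (ne_of_gt (htpos (φ k))) _
    -- a is in the asymptotic cone
    have hacone : a ∈ asympCone X := by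
      refine ⟨fun k => t (φ k), fun k => x (ψ (φ k)), httop, fun k => hxX _, ?_⟩
      have : ∀ k, (t (φ k))⁻¹ • x (ψ (φ k)) = (d ∘ φ) k := fun k => rfl
      simpa [this, Function.comp_def] using htend
    -- asympFun f a ≤ 0
    have hasymp : asympFun f a ≤ 0 := by
      have hmem : liminf (fun k => (((t (φ k))⁻¹ : ℝ) : EReal) * f (t (φ k) • d (φ k))) atTop ∈
          {L : EReal | ∃ t' : ℕ → ℝ, ∃ dk : ℕ → EuclideanSpace ℝ (Fin n),
            Tendsto t' atTop atTop ∧ Tendsto dk atTop (𝓝 a) ∧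
            L = liminf (fun k => (((t' k)⁻¹ : ℝ) : EReal) * f (t' k • dk k)) atTop} :=
        ⟨fun k => t (φ k), fun k => d (φ k), httop, htend, rfl⟩
      refine le_trans (sInf_le hmem) ?_
      -- bound the liminf by a sequence tending to 0
      set g : ℕ → ℝ := fun k => (t (φ k))⁻¹ * (y' + inner ℝ (u (ψ (φ k))) (x (ψ (φ k)))) with hg
      have hbound : ∀ k, (((t (φ k))⁻¹ : ℝ) : EReal) * f (t (φ k) • d (φ k)) ≤ ((g k : ℝ) : EReal) := by
        intro k
        rw [hsmul k, hrfx (ψ (φ k)), ← EReal.coe_mul]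
        apply EReal.coe_le_coe_iff.mpr
        rw [hg]
        have h1 : r (ψ (φ k)) ≤ y' + inner ℝ (u (ψ (φ k))) (x (ψ (φ k))) := by
          have := hrlt (ψ (φ k)); linarith
        exact mul_le_mul_of_nonneg_left h1 (inv_nonneg.mpr (htpos _).le)
      have hg0 : Tendsto g atTop (𝓝 0) := by
        apply squeeze_zero_norm (a := fun k : ℕ => (|y'| + 1) * (1 / ((k:ℝ) + 1)))
        · intro k
          have htk : ((k : ℝ) + 1) ≤ t (φ k) := by
            have h1 : (k : ℝ) ≤ (φ k : ℝ) := Nat.cast_le.mpr hφ.le_apply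
            have := hψnorm (φ k)
            linarith
          have htinv : (t (φ k))⁻¹ ≤ 1 / (k + 1) := by
            rw [one_div]
            exact inv_anti₀ (by positivity) htk
          have hinner_le : |(inner ℝ (u (ψ (φ k))) (x (ψ (φ k))) : ℝ)| ≤ ‖u (ψ (φ k))‖ * t (φ k) := by
            calc |(inner ℝ (u (ψ (φ k))) (x (ψ (φ k))) : ℝ)| ≤ ‖u (ψ (φ k))‖ * ‖x (ψ (φ k))‖ := by
                  exact abs_real_inner_le_norm _ _
              _ = ‖u (ψ (φ k))‖ * t (φ k) := rfl
          have hu_le : ‖u (ψ (φ k))‖ ≤ 1 / (k + 1) := by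
            refine le_trans (hu (ψ (φ k))).le ?_
            apply one_div_le_one_div_of_le (by positivity)
            have h1 : (k : ℝ) ≤ (ψ (φ k) : ℝ) :=
              Nat.cast_le.mpr (le_trans hφ.le_apply (hψle (φ k)))
            linarith
          rw [hg]
          have habs : |(t (φ k))⁻¹ * (y' + inner ℝ (u (ψ (φ k))) (x (ψ (φ k))))| ≤
              (t (φ k))⁻¹ * |y'| + (t (φ k))⁻¹ * |(inner ℝ (u (ψ (φ k))) (x (ψ (φ k))) : ℝ)| := by
            rw [abs_mul, abs_of_nonneg (inv_nonneg.mpr (htpos (φ k)).le)]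
            calc (t (φ k))⁻¹ * |y' + inner ℝ (u (ψ (φ k))) (x (ψ (φ k)))|
                ≤ (t (φ k))⁻¹ * (|y'| + |(inner ℝ (u (ψ (φ k))) (x (ψ (φ k))) : ℝ)|) :=
                  mul_le_mul_of_nonneg_left (abs_add_le _ _) (inv_nonneg.mpr (htpos (φ k)).le)
              _ = (t (φ k))⁻¹ * |y'| + (t (φ k))⁻¹ * |(inner ℝ (u (ψ (φ k))) (x (ψ (φ k))) : ℝ)| := by
                  ring
          refine le_trans habs ?_
          have h2 : (t (φ k))⁻¹ * |(inner ℝ (u (ψ (φ k))) (x (ψ (φ k))) : ℝ)| ≤ 1 / (k + 1) := by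
            calc (t (φ k))⁻¹ * |(inner ℝ (u (ψ (φ k))) (x (ψ (φ k))) : ℝ)| ≤
                (t (φ k))⁻¹ * (‖u (ψ (φ k))‖ * t (φ k)) :=
                  mul_le_mul_of_nonneg_left hinner_le (inv_nonneg.mpr (htpos _).le)
              _ = ‖u (ψ (φ k))‖ := by
                  rw [mul_comm (‖u (ψ (φ k))‖) (t (φ k)), ← mul_assoc,
                    inv_mul_cancel₀ (ne_of_gt (htpos (φ k))), one_mul]
              _ ≤ 1 / (k + 1) := hu_le
          have h3 : (t (φ k))⁻¹ * |y'| ≤ |y'| * (1 / (k + 1)) := by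
            rw [mul_comm]
            exact mul_le_mul_of_nonneg_left htinv (abs_nonneg _)
          calc (t (φ k))⁻¹ * |y'| + (t (φ k))⁻¹ * |(inner ℝ (u (ψ (φ k))) (x (ψ (φ k))) : ℝ)|
              ≤ |y'| * (1 / (k + 1)) + 1 / (k + 1) := add_le_add h3 h2
            _ = (|y'| + 1) * (1 / (k + 1)) := by ring
        · simpa using (tendsto_one_div_add_atTop_nhds_zero_nat.const_mul (|y'| + 1))
      have hgE : Tendsto (fun k => ((g k : ℝ) : EReal)) atTop (𝓝 (0 : EReal)) := by
        have := (EReal.continuous_coe_iff.mpr continuous_id).continuousAt.tendsto.comp hg0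
        simpa [Function.comp_def] using this
      calc liminf (fun k => (((t (φ k))⁻¹ : ℝ) : EReal) * f (t (φ k) • d (φ k))) atTop
          ≤ liminf (fun k => ((g k : ℝ) : EReal)) atTop :=
            liminf_le_liminf (Eventually.of_forall hbound)
        _ = 0 := hgE.liminf_eq
    have ha0 : a = 0 := by
      have : a ∈ asympCone X ∩ {d | asympFun f d ≤ 0} := ⟨hacone, hasymp⟩
      rw [hcone] at this
      exact this
    rw [ha0, norm_zero] at hanorm
    norm_num at hanorm


theorem stmt14 {n : ℕ} (f : EuclideanSpace ℝ (Fin n) → EReal)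
    (X : Set (EuclideanSpace ℝ (Fin n)))
    (hproper : ERealProper f) (hlsc : LowerSemicontinuous f) (hX : IsClosed X)
    (hunb : ¬ Bornology.IsBounded ({x | f x ≠ ⊤} ∩ X))
    (hcone : asympCone X ∩ {d | asympFun f d ≤ 0} = {0}) :
    LowerSemicontinuousAt (valFn f X) 0 ∧ ContinuousAt (valFn f X) 0 := by
  have h1 := aux_lsc f X hproper hlsc hX hcone
  have h2 := aux_usc f X hproper
  exact ⟨h1, continuousAt_iff_lower_upperSemicontinuousAt.mpr ⟨h1, h2⟩⟩
end
end

section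
/- Let f(x) = x²/(1 + x²) on ℝ. Then f is quasiconvex on ℝ, and its q-asymptotic function satisfies f^∞_q(d) > 0 for all d ≠ 0 (indeed {d : f^∞_q(d) ≤ 0} = {0}), while f is not coercive on ℝ. -/
open Filter Topology Metric Set RealInnerProductSpace

noncomputable section

variable {E : Type*} [NormedAddCommGroup E] [InnerProductSpace ℝ E]

theorem stmt17 :
    ERealQuasiconvex (fun x : ℝ => ((x ^ 2 / (1 + x ^ 2) : ℝ) : EReal)) ∧
      {d : ℝ | qAsympFun (fun x : ℝ => ((x ^ 2 / (1 + x ^ 2) : ℝ) : EReal)) d ≤ 0} = {0} ∧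
      ¬ (∀ M : ℝ, ∃ R : ℝ, ∀ x : ℝ, R < |x| →
        (M : EReal) < ((x ^ 2 / (1 + x ^ 2) : ℝ) : EReal)) := by
  have fmono : ∀ a b : ℝ, a ^ 2 ≤ b ^ 2 →
      a ^ 2 / (1 + a ^ 2) ≤ b ^ 2 / (1 + b ^ 2) := by
    intro a b h
    rw [div_le_div_iff₀ (by positivity) (by positivity)]
    nlinarith [sq_nonneg a, sq_nonneg b]
  refine ⟨?_, ?_, ?_⟩
  · intro x y a ha ha1
    have key : ∀ u v : ℝ, |u| ≤ |v| → u ^ 2 ≤ v ^ 2 := by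
      intro u v h
      have := pow_le_pow_left₀ (abs_nonneg u) h 2
      simpa [sq_abs] using this
    have key2 : ∀ u v : ℝ, u ^ 2 ≤ v ^ 2 → |u| ≤ |v| := by
      intro u v h
      nlinarith [abs_nonneg u, abs_nonneg v, sq_abs u, sq_abs v]
    have habs : |a * x + (1 - a) * y| ≤ a * |x| + (1 - a) * |y| := by
      refine (abs_add_le _ _).trans ?_
      rw [abs_mul, abs_mul, abs_of_nonneg ha, abs_of_nonneg (sub_nonneg.2 ha1)]
    have hsq : (a • x + (1 - a) • y) ^ 2 ≤ max (x ^ 2) (y ^ 2) := by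
      simp only [smul_eq_mul]
      rcases le_total (x ^ 2) (y ^ 2) with h | h
      · rw [max_eq_right h]
        refine key _ _ (habs.trans ?_)
        have hxy := key2 x y h
        nlinarith
      · rw [max_eq_left h]
        refine key _ _ (habs.trans ?_)
        have hxy := key2 y x h
        nlinarith
    rcases le_total (x ^ 2) (y ^ 2) with h | h
    · refine le_max_of_le_right ?_
      rw [EReal.coe_le_coe_iff]
      have := fmono _ _ (hsq.trans_eq (max_eq_right h))
      simpa using this
    · refine le_max_of_le_left ?_
      rw [EReal.coe_le_coe_iff]
      have := fmono _ _ (hsq.trans_eq (max_eq_left h))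
      simpa using this
  · ext d
    simp only [Set.mem_setOf_eq, Set.mem_singleton_iff]
    constructor
    · intro hd
      by_contra hd0
      have hpos : (0 : ℝ) < d ^ 2 / (1 + d ^ 2) := by positivity
      have hle : ((d ^ 2 / (1 + d ^ 2) : ℝ) : EReal) ≤
          qAsympFun (fun x : ℝ => ((x ^ 2 / (1 + x ^ 2) : ℝ) : EReal)) d := by
        unfold qAsympFun
        refine le_iSup₂_of_le (0 : ℝ) (by simp [EReal.coe_ne_top]) ?_
        refine le_iSup₂_of_le (1 : ℝ) (by norm_num) ?_
        norm_num
      have : ((d ^ 2 / (1 + d ^ 2) : ℝ) : EReal) ≤ 0 := hle.trans hd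
      rw [← EReal.coe_zero, EReal.coe_le_coe_iff] at this
      linarith
    · rintro rfl
      unfold qAsympFun
      refine iSup₂_le fun x hx => iSup₂_le fun t ht => ?_
      have : x + t • (0 : ℝ) = x := by simp
      rw [this, ← EReal.coe_sub, sub_self, EReal.coe_zero, mul_zero]
  · intro h
    obtain ⟨R, hR⟩ := h 1
    have hx : R < |(|R| + 1)| := by
      have h1 : R ≤ |R| := le_abs_self R
      have h2 : (0:ℝ) ≤ |R| := abs_nonneg R
      rw [abs_of_nonneg (by linarith)]
      linarith
    have := hR (|R| + 1) hx
    rw [EReal.coe_lt_coe_iff] at this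
    have hlt : (|R| + 1) ^ 2 / (1 + (|R| + 1) ^ 2) < 1 := by
      rw [div_lt_one (by positivity)]; linarith [sq_nonneg (|R| + 1)]
    linarith
end
end

section
/- Let f : ℝⁿ → ℝ ∪ {+∞} be proper lsc with lsc q-asymptotic function f^∞_q, and X ⊆ ℝⁿ closed. If X^∞ ∩ {d : f^∞_q(d) ≤ 0} = {0}, then there exists ε > 0 such that X^∞ ∩ {d : (f_u)^∞_q(d) ≤ 0} = {0} for all u with ‖u‖ < ε, where f_u(x) = f(x) − ⟨u, x⟩. -/
open Filter Topology Metric Set RealInnerProductSpace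

noncomputable section

variable {E : Type*} [NormedAddCommGroup E] [InnerProductSpace ℝ E]

lemma myExistsReal {a : EReal} (h1 : a ≠ ⊤) (h2 : a ≠ ⊥) : ∃ r : ℝ, a = r := by
  induction a using EReal.rec with
  | bot => simp at h2
  | coe x => exact ⟨x, rfl⟩
  | top => simp at h1

lemma mySubSub (a : EReal) (ha : a ≠ ⊥) (r s : ℝ) :
    a - (r : EReal) - (s : EReal) = a - ((r + s : ℝ) : EReal) := by
  induction a using EReal.rec with
  | bot => simp at ha
  | coe x => norm_cast; ring
  | top => rw [EReal.top_sub_coe, EReal.top_sub_coe, EReal.top_sub_coe]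

lemma myEkey (t c b : ℝ) (ht : 0 < t) (a : EReal) (ha : a ≠ ⊥) :
    ((t⁻¹ : ℝ) : EReal) * (a - ((b + t * c : ℝ) : EReal)) =
      ((t⁻¹ : ℝ) : EReal) * (a - (b : EReal)) - (c : EReal) := by
  induction a using EReal.rec with
  | bot => simp at ha
  | coe x =>
    norm_cast
    field_simp
    ring
  | top =>
    rw [EReal.top_sub_coe, EReal.top_sub_coe,
      EReal.coe_mul_top_of_pos (by positivity), EReal.top_sub_coe]

lemma mySubRealNeBot (a : EReal) (ha : a ≠ ⊥) (r : ℝ) : a - (r : EReal) ≠ ⊥ := by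
  induction a using EReal.rec with
  | bot => simp at ha
  | coe x => norm_cast; exact EReal.coe_ne_bot _
  | top => simp [EReal.top_sub_coe]

lemma mySubRealNeTop (a : EReal) (ha : a ≠ ⊤) (r : ℝ) : a - (r : EReal) ≠ ⊤ := by
  induction a using EReal.rec with
  | bot => simp
  | coe x => norm_cast; exact EReal.coe_ne_top _
  | top => simp at ha

/-- If the perturbed asymptotic function is ≤ 0 then `qAsympFun f d ≤ ⟪u,d⟫`. -/
lemma pert_bound (f : E → EReal) (hproper : ERealProper f) (u d : E)
    (h : qAsympFun (fun x => f x - ((inner ℝ u x : ℝ) : EReal)) d ≤ 0) :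
    qAsympFun f d ≤ ((inner ℝ u d : ℝ) : EReal) := by
  apply iSup₂_le
  intro x hx
  apply iSup₂_le
  intro t ht
  simp only [Set.mem_Ioi] at ht
  obtain ⟨b, hb⟩ := myExistsReal hx (hproper.1 x)
  -- the perturbed term is ≤ 0
  have hxmem : x ∈ {x : E | f x - ((inner ℝ u x : ℝ) : EReal) ≠ ⊤} := by
    simp only [Set.mem_setOf_eq]
    exact mySubRealNeTop _ hx _
  have hterm : ((t⁻¹ : ℝ) : EReal) *
      ((f (x + t • d) - ((inner ℝ u (x + t • d) : ℝ) : EReal)) -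
        (f x - ((inner ℝ u x : ℝ) : EReal))) ≤ 0 := by
    refine le_trans ?_ h
    exact le_iSup₂_of_le x hxmem (le_iSup₂_of_le t ht le_rfl)
  have hinner : (inner ℝ u (x + t • d) : ℝ) = (inner ℝ u x : ℝ) + t * (inner ℝ u d : ℝ) := by
    rw [inner_add_right, real_inner_smul_right]
  have hrw : (f (x + t • d) - ((inner ℝ u (x + t • d) : ℝ) : EReal)) -
        (f x - ((inner ℝ u x : ℝ) : EReal)) =
      f (x + t • d) - ((b + t * (inner ℝ u d : ℝ) : ℝ) : EReal) := by
    rw [hb]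
    rw [show ((b : ℝ) : EReal) - ((inner ℝ u x : ℝ) : EReal) = ((b - (inner ℝ u x : ℝ) : ℝ) : EReal)
      from by norm_cast]
    rw [mySubSub _ (hproper.1 _) _ _, hinner]
    congr 2
    ring
  rw [hrw, myEkey t _ b ht _ (hproper.1 _)] at hterm
  have := (EReal.sub_le_iff_le_add
    (Or.inl (EReal.coe_ne_bot _)) (Or.inr (EReal.coe_ne_bot _))).1 hterm
  rw [hb]
  simpa using this

/-- Positive scaling inequality for `qAsympFun`. -/
lemma qAsymp_smul_le (f : E → EReal) (c : ℝ) (hc : 0 < c) (d : E) :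
    qAsympFun f (c • d) ≤ (c : EReal) * qAsympFun f d := by
  apply iSup₂_le
  intro x hx
  apply iSup₂_le
  intro t ht
  simp only [Set.mem_Ioi] at ht
  have hs : (0:ℝ) < t * c := mul_pos ht hc
  have key : ((t⁻¹ : ℝ) : EReal) = (c : EReal) * (((t * c)⁻¹ : ℝ) : EReal) := by
    norm_cast
    field_simp
  rw [smul_smul, key, mul_assoc]
  apply mul_le_mul_of_nonneg_left _ (by exact_mod_cast hc.le)
  exact le_iSup₂_of_le x hx (le_iSup₂_of_le (t * c) hs le_rfl)

/-- `qAsympFun g 0 ≤ 0` when `g` never takes value `⊥`. -/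
lemma qAsymp_zero_le (g : E → EReal) (hg : ∀ x, g x ≠ ⊥) : qAsympFun g 0 ≤ 0 := by
  apply iSup₂_le
  intro x hx
  apply iSup₂_le
  intro t ht
  simp only [Set.mem_Ioi] at ht
  obtain ⟨b, hb⟩ := myExistsReal hx (hg x)
  rw [smul_zero, add_zero, hb]
  rw [show ((b : ℝ) : EReal) - ((b : ℝ) : EReal) = (0 : EReal) from by norm_cast; ring]
  simp

/-- asympCone is sequentially closed. -/
lemma asympCone_seq_closed {X : Set E} (g : ℕ → E) (hg : ∀ m, g m ∈ asympCone X)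
    (e : E) (h : Tendsto g atTop (𝓝 e)) : e ∈ asympCone X := by
  have H : ∀ m : ℕ, ∃ (T : ℝ) (Y : E), Y ∈ X ∧ ((m : ℝ) + 1) ≤ T ∧
      dist (T⁻¹ • Y) (g m) < 1 / ((m : ℝ) + 1) := by
    intro m
    obtain ⟨t, x, ht, hxX, hlim⟩ := hg m
    have h1 : ∀ᶠ k in atTop, ((m : ℝ) + 1) ≤ t k := ht.eventually_ge_atTop _
    have h2 : ∀ᶠ k in atTop, dist ((t k)⁻¹ • x k) (g m) < 1 / ((m : ℝ) + 1) :=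
      (Metric.tendsto_nhds.1 hlim) _ (by positivity)
    obtain ⟨k, hk1, hk2⟩ := (h1.and h2).exists
    exact ⟨t k, x k, hxX k, hk1, hk2⟩
  choose T Y hY hT hdist using H
  refine ⟨T, Y, ?_, hY, ?_⟩
  · refine tendsto_atTop_mono hT ?_
    exact tendsto_atTop_add_const_right _ 1 tendsto_natCast_atTop_atTop
  · rw [tendsto_iff_dist_tendsto_zero]
    refine squeeze_zero (g := fun m : ℕ => 1 / ((m : ℝ) + 1) + dist (g m) e) (fun m => dist_nonneg) (fun m => ?_) ?_
    · exact (dist_triangle ((T m)⁻¹ • Y m) (g m) e).trans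
        (by linarith [(hdist m).le])
    · have h1 : Tendsto (fun m : ℕ => 1 / ((m : ℝ) + 1)) atTop (𝓝 0) :=
        tendsto_one_div_add_atTop_nhds_zero_nat
      have h2 : Tendsto (fun m => dist (g m) e) atTop (𝓝 0) :=
        tendsto_iff_dist_tendsto_zero.1 h
      simpa using h1.add h2
theorem stmt18 {n : ℕ} (f : EuclideanSpace ℝ (Fin n) → EReal)
    (X : Set (EuclideanSpace ℝ (Fin n)))
    (hproper : ERealProper f) (hlsc : LowerSemicontinuous f)
    (hqlsc : LowerSemicontinuous (qAsympFun f)) (hX : IsClosed X)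
    (hcone : asympCone X ∩ {d | qAsympFun f d ≤ 0} = {0}) :
    ∃ ε > (0:ℝ), ∀ u : EuclideanSpace ℝ (Fin n), ‖u‖ < ε →
      asympCone X ∩
        {d | qAsympFun (fun x => f x - ((inner ℝ u x : ℝ) : EReal)) d ≤ 0} = {0} := by
  by_contra hcon
  push_neg at hcon
  have h0cone : (0 : EuclideanSpace ℝ (Fin n)) ∈ asympCone X := by
    have h0 : (0 : EuclideanSpace ℝ (Fin n)) ∈ ({0} : Set (EuclideanSpace ℝ (Fin n))) := rfl
    rw [← hcone] at h0
    exact h0.1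
  have key : ∀ k : ℕ, ∃ u : EuclideanSpace ℝ (Fin n), ‖u‖ < 1 / ((k : ℝ) + 1) ∧
      ∃ d, d ∈ asympCone X ∧ d ≠ 0 ∧ qAsympFun f d ≤ ((inner ℝ u d : ℝ) : EReal) := by
    intro k
    obtain ⟨u, hu, hne⟩ := hcon (1 / ((k : ℝ) + 1)) (by positivity)
    refine ⟨u, hu, ?_⟩
    have hzsub : ({0} : Set (EuclideanSpace ℝ (Fin n))) ⊆ asympCone X ∩
        {d | qAsympFun (fun x => f x - ((inner ℝ u x : ℝ) : EReal)) d ≤ 0} :=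
      Set.singleton_subset_iff.2
        ⟨h0cone, qAsymp_zero_le _ (fun x => mySubRealNeBot _ (hproper.1 x) _)⟩
    have hns : ¬ (asympCone X ∩
        {d | qAsympFun (fun x => f x - ((inner ℝ u x : ℝ) : EReal)) d ≤ 0} ⊆ {0}) :=
      fun hsub => hne (Set.Subset.antisymm hsub hzsub)
    obtain ⟨d, hdS, hd0⟩ := Set.not_subset.1 hns
    exact ⟨d, hdS.1, fun h => hd0 (by simp [h]), pert_bound f hproper u d hdS.2⟩
  choose u hu d hdX hd0 hdq using key
  set e : ℕ → EuclideanSpace ℝ (Fin n) := fun k => ‖d k‖⁻¹ • d k with he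
  have hnorm : ∀ k, ‖e k‖ = 1 := by
    intro k
    rw [he]
    simp only [norm_smul, norm_inv, norm_norm]
    exact inv_mul_cancel₀ (norm_ne_zero_iff.2 (hd0 k))
  have heX : ∀ k, e k ∈ asympCone X :=
    fun k => asympCone_smul (hdX k) (inv_pos.2 (norm_pos_iff.2 (hd0 k)))
  have heq : ∀ k, qAsympFun f (e k) ≤ ((1 / ((k : ℝ) + 1) : ℝ) : EReal) := by
    intro k
    have hc : (0:ℝ) < ‖d k‖⁻¹ := inv_pos.2 (norm_pos_iff.2 (hd0 k))
    calc qAsympFun f (e k) ≤ ((‖d k‖⁻¹ : ℝ) : EReal) * qAsympFun f (d k) :=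
          qAsymp_smul_le f _ hc _
      _ ≤ ((‖d k‖⁻¹ : ℝ) : EReal) * ((inner ℝ (u k) (d k) : ℝ) : EReal) :=
          mul_le_mul_of_nonneg_left (hdq k) (by exact_mod_cast hc.le)
      _ = ((‖d k‖⁻¹ * (inner ℝ (u k) (d k) : ℝ) : ℝ) : EReal) := by norm_cast
      _ ≤ ((1 / ((k : ℝ) + 1) : ℝ) : EReal) := by
          apply EReal.coe_le_coe_iff.2
          have h1 : ‖d k‖⁻¹ * (inner ℝ (u k) (d k) : ℝ) = (inner ℝ (u k) (e k) : ℝ) := by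
            rw [he]; rw [real_inner_smul_right]
          rw [h1]
          calc (inner ℝ (u k) (e k) : ℝ) ≤ ‖u k‖ * ‖e k‖ := real_inner_le_norm _ _
            _ = ‖u k‖ := by rw [hnorm k, mul_one]
            _ ≤ 1 / ((k : ℝ) + 1) := (hu k).le
  obtain ⟨z, hzs, φ, hφ, hzl⟩ :=
    (isCompact_sphere (0 : EuclideanSpace ℝ (Fin n)) 1).tendsto_subseq
      (fun k => mem_sphere_zero_iff_norm.2 (hnorm k))
  have hz1 : ‖z‖ = 1 := mem_sphere_zero_iff_norm.1 hzs
  have hzcone : z ∈ asympCone X :=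
    asympCone_seq_closed (fun j => e (φ j)) (fun j => heX _) z hzl
  have hzq : qAsympFun f z ≤ 0 := by
    by_contra hpos
    push_neg at hpos
    obtain ⟨r, hr0, hrq⟩ := exists_between hpos
    obtain ⟨ρ, hρ⟩ := myExistsReal (lt_of_lt_of_le hrq le_top).ne (ne_bot_of_gt hr0)
    have hρ0 : (0:ℝ) < ρ := by
      rw [hρ] at hr0; exact_mod_cast hr0
    have hev2 : ∀ᶠ j in atTop, r < qAsympFun f (e (φ j)) :=
      hzl.eventually (hqlsc z r hrq)
    have hlim0 : Tendsto (fun j : ℕ => 1 / ((φ j : ℝ) + 1)) atTop (𝓝 0) :=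
      tendsto_one_div_add_atTop_nhds_zero_nat.comp hφ.tendsto_atTop
    have hev3 : ∀ᶠ j in atTop, 1 / ((φ j : ℝ) + 1) < ρ :=
      hlim0.eventually (gt_mem_nhds hρ0)
    obtain ⟨j, hj1, hj2⟩ := (hev2.and hev3).exists
    have hlt := lt_of_lt_of_le hj1 (heq (φ j))
    rw [hρ] at hlt
    exact absurd (EReal.coe_lt_coe_iff.1 hlt) (not_lt.2 hj2.le)
  have hz0 : z ∈ ({0} : Set (EuclideanSpace ℝ (Fin n))) := hcone ▸ ⟨hzcone, hzq⟩
  rw [Set.mem_singleton_iff] at hz0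
  rw [hz0, norm_zero] at hz1
  norm_num at hz1
end
end

section
/- Let X ⊆ ℝⁿ be convex, f quasiconvex with X ⊆ dom f, and suppose Sol(0) = argmin_X f = {x̄} but there exists d ∈ X^∞, d ≠ 0, with f^∞_q(d) ≤ 0. Then for uₖ := d/k, one has (f_{uₖ})^∞_q(d) < 0, f_{uₖ}(x̄ + t d) → −∞ as t → ∞, and Sol(uₖ) = ∅ for every k; hence the solution map is not lower semicontinuous at 0. -/
open Filter Topology Metric Set RealInnerProductSpace

noncomputable section

variable {E : Type*} [NormedAddCommGroup E] [InnerProductSpace ℝ E]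

set_option maxHeartbeats 1000000 in
lemma fiber_core {F : Type} [NormedAddCommGroup F] [InnerProductSpace ℝ F]
    [FiniteDimensional ℝ F]
    {X : Set F} (hX : Convex ℝ X) (h0 : (0:F) ∈ X)
    (hspan : Submodule.span ℝ X = ⊤)
    {d : F} (hd0 : d ≠ 0)
    (x : ℕ → F) (hx : ∀ k, x k ∈ X)
    (ha : Tendsto (fun k => ⟪d, x k⟫ / ‖d‖^2) atTop atTop)
    (hq : Tendsto (fun k =>
        ‖((Submodule.orthogonalProjection (Submodule.span ℝ {d})ᗮ (x k)) : F)‖ /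
          (⟪d, x k⟫ / ‖d‖^2)) atTop (𝓝 0)) :
    ∃ y ∈ X, ∀ M : ℝ, ∃ τ : ℝ, M ≤ τ ∧ y + τ • d ∈ X := by
  classical
  set H : Submodule ℝ F := (Submodule.span ℝ {d})ᗮ with hH
  set P := Submodule.orthogonalProjection H with hP
  set β : F → ℝ := fun v => ⟪d, v⟫ / ‖d‖^2 with hβ
  have hd2 : (0:ℝ) < ‖d‖^2 := pow_pos (norm_pos_iff.2 hd0) 2
  have hdec : ∀ v : F, (P v : F) = v - β v • d := by
    intro v
    have h1 := Submodule.starProjection_add_starProjection_orthogonal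
      (K := Submodule.span ℝ {d}) v
    simp only [Submodule.starProjection_apply] at h1
    have h2 : ((Submodule.orthogonalProjection (Submodule.span ℝ {d}) v) : F) = β v • d := by
      rw [← Submodule.starProjection_apply, Submodule.starProjection_singleton]
      norm_num [hβ]
    rw [h2] at h1
    exact eq_sub_of_add_eq' h1
  have hfibeq : ∀ w₀ w₁ : F, P w₀ = P w₁ → w₁ = w₀ + (β w₁ - β w₀) • d := by
    intro w₀ w₁ hPe
    have h1 : (P w₀ : F) = (P w₁ : F) := by rw [hPe]
    rw [hdec, hdec] at h1
    have h4 : w₁ = w₀ - β w₀ • d + β w₁ • d := by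
      have h5 : w₁ - β w₁ • d + β w₁ • d = (w₀ - β w₀ • d) + β w₁ • d := by rw [← h1]
      simpa using h5
    calc w₁ = w₀ - β w₀ • d + β w₁ • d := h4
      _ = w₀ + (β w₁ - β w₀) • d := by rw [sub_smul]; abel
  have hβsmul : ∀ (c : ℝ) (v : F), β (c • v) = c * β v := by
    intro c v; simp only [hβ, real_inner_smul_right]; ring
  set T : H → Set ℝ := fun z => β '' {w | w ∈ X ∧ P w = z} with hT
  by_cases hA : ∃ z : H, ¬ BddAbove (T z)
  · obtain ⟨z, hz⟩ := hA
    have hne : (T z).Nonempty := by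
      by_contra hc
      rw [Set.not_nonempty_iff_eq_empty] at hc
      exact hz (hc ▸ bddAbove_empty)
    obtain ⟨r₀, w₀, ⟨hw₀X, hw₀P⟩, hw₀β⟩ := hne
    refine ⟨w₀, hw₀X, ?_⟩
    intro M
    obtain ⟨r, ⟨w₁, ⟨hw₁X, hw₁P⟩, hw₁β⟩, hrM⟩ := (not_bddAbove_iff.1 hz) (M + β w₀)
    refine ⟨β w₁ - β w₀, ?_, ?_⟩
    · rw [hw₁β]; linarith
    · have := hfibeq w₀ w₁ (by rw [hw₀P, hw₁P])
      rw [← this]; exact hw₁X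
  · push_neg at hA
    exfalso
    set Ψ : H → ℝ := fun z => sSup (T z) with hΨ
    set C : Set H := ⇑P '' X with hC
    have hCconv : Convex ℝ C := hX.is_linear_image ⟨fun a b => map_add P a b,
      fun c a => map_smul P c a⟩
    have h0C : (0 : H) ∈ C := ⟨0, h0, map_zero P⟩
    have hmemT : ∀ w : F, w ∈ X → β w ∈ T (P w) := fun w hw => ⟨w, ⟨hw, rfl⟩, rfl⟩
    have hTne : ∀ z ∈ C, (T z).Nonempty := by
      rintro z ⟨w, hw, rfl⟩; exact ⟨β w, hmemT w hw⟩
    have hΨge : ∀ w : F, w ∈ X → β w ≤ Ψ (P w) := by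
      intro w hw; exact le_csSup (hA _) (hmemT w hw)
    have hconc : ConcaveOn ℝ C Ψ := by
      refine ⟨hCconv, ?_⟩
      rintro z₁ hz₁ z₂ hz₂ a b hia hib hab
      apply le_of_forall_pos_le_add
      intro ε hε
      obtain ⟨r₁, hr₁T, hr₁⟩ := exists_lt_of_lt_csSup (hTne z₁ hz₁)
        (show Ψ z₁ - ε < sSup (T z₁) by simp only [hΨ]; linarith [le_refl (sSup (T z₁))])
      obtain ⟨r₂, hr₂T, hr₂⟩ := exists_lt_of_lt_csSup (hTne z₂ hz₂)
        (show Ψ z₂ - ε < sSup (T z₂) by simp only [hΨ]; linarith [le_refl (sSup (T z₂))])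
      obtain ⟨w₁, ⟨hw₁X, hw₁P⟩, hw₁β⟩ := hr₁T
      obtain ⟨w₂, ⟨hw₂X, hw₂P⟩, hw₂β⟩ := hr₂T
      have hwmem : a • w₁ + b • w₂ ∈ X := hX hw₁X hw₂X hia hib hab
      have hwP : P (a • w₁ + b • w₂) = a • z₁ + b • z₂ := by
        rw [map_add, map_smul, map_smul, hw₁P, hw₂P]
      have hwβ : β (a • w₁ + b • w₂) = a * r₁ + b * r₂ := by
        simp only [hβ, inner_add_right, real_inner_smul_right]
        rw [← hw₁β, ← hw₂β]
        simp only [hβ]; field_simp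
      have hle : a * r₁ + b * r₂ ≤ Ψ (a • z₁ + b • z₂) := by
        have := hΨge _ hwmem
        rw [hwβ, hwP] at this; exact this
      have e1 : a • Ψ z₁ + b • Ψ z₂ ≤ a * (r₁ + ε) + b * (r₂ + ε) := by
        simp only [smul_eq_mul]
        have g1 := mul_le_mul_of_nonneg_left (show Ψ z₁ ≤ r₁ + ε by linarith) hia
        have g2 := mul_le_mul_of_nonneg_left (show Ψ z₂ ≤ r₂ + ε by linarith) hib
        linarith
      calc a • Ψ z₁ + b • Ψ z₂ ≤ a * (r₁ + ε) + b * (r₂ + ε) := e1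
        _ = a * r₁ + b * r₂ + (a + b) * ε := by ring
        _ = a * r₁ + b * r₂ + ε := by rw [hab]; ring
        _ ≤ Ψ (a • z₁ + b • z₂) + ε := by linarith
    -- spikes
    have hsp : ∀ m : ℝ, 0 ≤ m → ∀ ε : ℝ, 0 < ε → ∃ ζ ∈ C, ‖ζ‖ < ε ∧ m ≤ Ψ ζ := by
      intro m hm ε hε
      have h1 : ∀ᶠ k in atTop, max m 1 ≤ β (x k) := ha.eventually_ge_atTop _
      have h2 : ∀ᶠ k in atTop,
          m * (‖((P (x k)) : F)‖ / β (x k)) < ε := by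
        have h3 : Tendsto (fun k => m * (‖((P (x k)) : F)‖ / β (x k))) atTop (𝓝 (m * 0)) :=
          (hq.const_mul m)
        rw [mul_zero] at h3
        exact h3.eventually_lt_const hε
      obtain ⟨k, hk1, hk2⟩ := (h1.and h2).exists
      have hak : (0:ℝ) < β (x k) := lt_of_lt_of_le one_pos (le_trans (le_max_right m 1) hk1)
      set s : F := (m / β (x k)) • x k with hs
      have hsX : s ∈ X := hX.smul_mem_of_zero_mem h0 (hx k)
        ⟨by positivity, div_le_one_of_le₀ (le_trans (le_max_left m 1) hk1) hak.le⟩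
      have hβs : β s = m := by
        rw [hs, hβsmul, div_mul_cancel₀ _ hak.ne']
      refine ⟨P s, ⟨s, hsX, rfl⟩, ?_, ?_⟩
      · have : P s = (m / β (x k)) • P (x k) := by rw [hs, map_smul]
        have hns : ‖P s‖ = (m / β (x k)) * ‖((P (x k)) : F)‖ := by
          rw [this, norm_smul, Real.norm_eq_abs, abs_of_nonneg (by positivity)]
          congr 1
        rw [hns]
        calc (m / β (x k)) * ‖((P (x k)) : F)‖
            = m * (‖((P (x k)) : F)‖ / β (x k)) := by ring
          _ < ε := hk2
      · have := hΨge s hsX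
        rw [hβs] at this; exact this
    -- interior nonempty
    have hPsurj : Function.Surjective ⇑P := fun z =>
      ⟨(z : F), Submodule.orthogonalProjection_mem_subspace_eq_self z⟩
    have hspanC : Submodule.span ℝ C = ⊤ := by
      rw [hC, show ⇑P = ⇑(P : F →ₗ[ℝ] H) from rfl, Submodule.span_image, hspan, Submodule.map_top]
      exact LinearMap.range_eq_top.2 hPsurj
    have haff : affineSpan ℝ C = ⊤ := by
      have hdir : (affineSpan ℝ C).direction = ⊤ := by
        rw [direction_affineSpan]
        apply top_unique
        rw [← hspanC]
        apply Submodule.span_le.2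
        intro c hc
        have := vsub_mem_vectorSpan ℝ hc h0C
        simpa using this
      apply AffineSubspace.ext_of_direction_eq
      · rw [hdir, AffineSubspace.direction_top]
      · exact ⟨0, mem_affineSpan ℝ h0C, trivial⟩
    obtain ⟨q₀, hq₀⟩ := (hCconv.interior_nonempty_iff_affineSpan_eq_top).2 haff
    obtain ⟨ε₀, hε₀, hball⟩ := Metric.isOpen_iff.1 isOpen_interior q₀ hq₀
    set r₀ := ε₀ / 2 with hr₀
    have hr₀pos : 0 < r₀ := by positivity
    have hcb : closedBall q₀ r₀ ⊆ interior C :=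
      (closedBall_subset_ball (by simp only [hr₀]; linarith)).trans hball
    have hcont : ContinuousOn Ψ (interior C) := hconc.continuousOn_interior
    obtain ⟨B, hB⟩ := (isCompact_closedBall q₀ r₀).bddAbove_image (hcont.mono hcb)
    have hBle : ∀ z ∈ closedBall q₀ r₀, Ψ z ≤ B := fun z hz =>
      hB (Set.mem_image_of_mem Ψ hz)
    by_cases hq0 : q₀ = 0
    · obtain ⟨ζ, hζC, hζn, hζΨ⟩ := hsp (max (B + 1) 0) (le_max_right _ _) r₀ hr₀pos
      have hζball : ζ ∈ closedBall q₀ r₀ := by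
        rw [hq0]
        simpa [Metric.mem_closedBall, dist_zero_right] using hζn.le
      have h1 := hBle ζ hζball
      have h2 : (B + 1 : ℝ) ≤ B := le_trans (le_max_left _ _) (le_trans hζΨ h1)
      linarith
    · have hq₀n : 0 < ‖q₀‖ := norm_pos_iff.2 hq0
      set r := min r₀ (‖q₀‖ / 2) with hr
      have hrpos : 0 < r := lt_min hr₀pos (by positivity)
      have hrq : r ≤ ‖q₀‖ / 2 := min_le_right _ _
      have hrr₀ : r ≤ r₀ := min_le_left _ _
      set μ₀ := r / (‖q₀‖ + r) with hμ₀
      have hμ₀pos : 0 < μ₀ := by positivity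
      set m := max ((B + |Ψ q₀| + 1) / μ₀) 0 with hm
      have hm0 : 0 ≤ m := le_max_right _ _
      obtain ⟨ζ, hζC, hζn, hζΨ⟩ := hsp m hm0 (r / 2) (by positivity)
      set D := ‖ζ - q₀‖ with hD
      have habs : |‖ζ‖ - ‖q₀‖| ≤ D := by rw [hD]; exact abs_norm_sub_norm_le ζ q₀
      have hD1 : r ≤ D := by
        have h1 : ‖q₀‖ - ‖ζ‖ ≤ D := by
          rw [abs_sub_comm] at habs
          exact le_trans (le_abs_self _) habs
        have h2 : 2 * r ≤ ‖q₀‖ := by linarith [hrq]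
        linarith [hζn]
      have hD2 : D ≤ ‖q₀‖ + r := by
        have h1 : D ≤ ‖ζ‖ + ‖q₀‖ := by rw [hD]; exact norm_sub_le _ _
        linarith [hζn, hrpos]
      have hDpos : 0 < D := lt_of_lt_of_le hrpos hD1
      set μ := r / D with hμ
      have hμpos : 0 < μ := by positivity
      have hμ1 : μ ≤ 1 := by rw [hμ]; exact (div_le_one hDpos).2 hD1
      have hμμ₀ : μ₀ ≤ μ := by
        rw [hμ, hμ₀]
        exact div_le_div_of_nonneg_left hrpos.le hDpos hD2
      set η := (1 - μ) • q₀ + μ • ζ with hη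
      have hηC : η ∈ C := hCconv (interior_subset hq₀) hζC (by linarith) hμpos.le (by ring)
      have hηball : η ∈ closedBall q₀ r₀ := by
        have hsub : η - q₀ = μ • (ζ - q₀) := by rw [hη]; module
        have : ‖η - q₀‖ = μ * D := by
          rw [hsub, norm_smul, Real.norm_eq_abs, abs_of_nonneg hμpos.le, hD]
        rw [Metric.mem_closedBall, dist_eq_norm, this, hμ]
        calc r / D * D = r := div_mul_cancel₀ r hDpos.ne'
          _ ≤ r₀ := hrr₀
      have hΨη : (1 - μ) * Ψ q₀ + μ * Ψ ζ ≤ Ψ η := by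
        have := hconc.2 (interior_subset hq₀) hζC (by linarith : (0:ℝ) ≤ 1 - μ)
          hμpos.le (by ring)
        simpa [smul_eq_mul] using this
      have hfinal : Ψ η ≤ B := hBle η hηball
      have hμ₀m : B + |Ψ q₀| + 1 ≤ μ₀ * m := by
        have h1 : (B + |Ψ q₀| + 1) / μ₀ ≤ m := le_max_left _ _
        have h2 := mul_le_mul_of_nonneg_left h1 hμ₀pos.le
        rwa [mul_div_cancel₀ _ hμ₀pos.ne'] at h2
      have h1 : μ₀ * m ≤ μ * m := mul_le_mul_of_nonneg_right hμμ₀ hm0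
      have h2 : μ * m ≤ μ * Ψ ζ := mul_le_mul_of_nonneg_left hζΨ hμpos.le
      have h3 : -|Ψ q₀| ≤ (1 - μ) * Ψ q₀ := by
        nlinarith [neg_abs_le (Ψ q₀), le_abs_self (Ψ q₀)]
      linarith

set_option maxHeartbeats 1000000 in
lemma fiber_wrap (n : ℕ) : ∀ (F : Type) (_ : NormedAddCommGroup F)
    (_ : InnerProductSpace ℝ F) (_ : FiniteDimensional ℝ F),
    Module.finrank ℝ F ≤ n → ∀ (X : Set F), Convex ℝ X → ∀ (d : F), d ≠ 0 →
    ∀ (t : ℕ → ℝ) (x : ℕ → F), Tendsto t atTop atTop → (∀ k, x k ∈ X) →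
    Tendsto (fun k => (t k)⁻¹ • x k) atTop (𝓝 d) →
    ∃ y ∈ X, ∀ M : ℝ, ∃ τ : ℝ, M ≤ τ ∧ y + τ • d ∈ X := by
  induction n with
  | zero =>
    intro F _ _ _ hrk X hX d hd0 t x ht hx hlim
    exfalso
    have : Subsingleton F := Module.finrank_zero_iff.1 (Nat.le_zero.1 hrk)
    exact hd0 (Subsingleton.elim d 0)
  | succ n ih =>
    intro F iNACG iIPS iFD hrk X hX d hd0 t x ht hx hlim
    -- translate so that 0 ∈ X
    set X' : Set F := (fun v => x 0 + v) ⁻¹' X with hX'def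
    have hX' : Convex ℝ X' := hX.translate_preimage_right (x 0)
    have h0X' : (0:F) ∈ X' := by
      simp only [hX'def, Set.mem_preimage, add_zero]; exact hx 0
    set x' : ℕ → F := fun k => x k - x 0 with hx'def
    have hx' : ∀ k, x' k ∈ X' := by
      intro k
      simp only [hX'def, hx'def, Set.mem_preimage, add_sub_cancel]
      exact hx k
    have hinv0 : Tendsto (fun k => (t k)⁻¹) atTop (𝓝 0) := ht.inv_tendsto_atTop
    have hlim' : Tendsto (fun k => (t k)⁻¹ • x' k) atTop (𝓝 d) := by
      have h0 : Tendsto (fun k => (t k)⁻¹ • x 0) atTop (𝓝 (0:F)) := by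
        simpa using hinv0.smul_const (x 0)
      have h1 : Tendsto (fun k => (t k)⁻¹ • x k - (t k)⁻¹ • x 0) atTop (𝓝 (d - 0)) :=
        hlim.sub h0
      rw [sub_zero] at h1
      refine h1.congr (fun k => ?_)
      simp only [hx'def, smul_sub]
    -- conclusion transfer
    have key : (∃ y ∈ X', ∀ M : ℝ, ∃ τ : ℝ, M ≤ τ ∧ y + τ • d ∈ X') →
        ∃ y ∈ X, ∀ M : ℝ, ∃ τ : ℝ, M ≤ τ ∧ y + τ • d ∈ X := by
      rintro ⟨y, hyX', hfib⟩
      refine ⟨x 0 + y, hyX', fun M => ?_⟩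
      obtain ⟨τ, hτ, hmem⟩ := hfib M
      exact ⟨τ, hτ, by rw [add_assoc]; exact hmem⟩
    apply key
    set S : Submodule ℝ F := Submodule.span ℝ X' with hSdef
    have hxS : ∀ k, x' k ∈ S := fun k => Submodule.subset_span (hx' k)
    have hdS : d ∈ S := by
      refine S.closed_of_finiteDimensional.mem_of_tendsto hlim' ?_
      exact Eventually.of_forall (fun k => S.smul_mem _ (hxS k))
    by_cases hS : S = ⊤
    · -- full span case
      set β : F → ℝ := fun v => ⟪d, v⟫ / ‖d‖^2 with hβ
      have hd2 : (0:ℝ) < ‖d‖^2 := pow_pos (norm_pos_iff.2 hd0) 2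
      have htpos : ∀ᶠ k in atTop, 0 < t k := ht.eventually_gt_atTop 0
      -- inner products converge
      have hinn : Tendsto (fun k => (t k)⁻¹ * ⟪d, x' k⟫) atTop (𝓝 (‖d‖^2)) := by
        have h1 : Tendsto (fun k => ⟪d, (t k)⁻¹ • x' k⟫) atTop (𝓝 (⟪d, d⟫)) :=
          tendsto_const_nhds.inner hlim'
        rw [real_inner_self_eq_norm_sq] at h1
        refine h1.congr (fun k => ?_)
        rw [real_inner_smul_right]
      have ha' : Tendsto (fun k => ⟪d, x' k⟫) atTop atTop := by
        have hev : ∀ᶠ k in atTop, (‖d‖^2 / 2) * t k ≤ ⟪d, x' k⟫ := by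
          filter_upwards [htpos, hinn.eventually_const_le (by linarith : ‖d‖^2/2 < ‖d‖^2)] with k hk1 hk2
          have h3 : (‖d‖^2/2) * t k ≤ ((t k)⁻¹ * ⟪d, x' k⟫) * t k :=
            mul_le_mul_of_nonneg_right hk2 hk1.le
          calc (‖d‖^2/2) * t k ≤ ((t k)⁻¹ * ⟪d, x' k⟫) * t k := h3
            _ = ⟪d, x' k⟫ := by field_simp
        exact tendsto_atTop_mono' atTop hev ((ht.const_mul_atTop (by positivity)))
      have ha : Tendsto (fun k => β (x' k)) atTop atTop := by
        simp only [hβ]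
        exact ha'.atTop_div_const hd2
      -- projection part
      set P := Submodule.orthogonalProjection (Submodule.span ℝ {d})ᗮ with hP
      have hPd : P d = 0 := by
        rw [hP, Submodule.orthogonalProjectionOnto_eq_zero_iff]
        rw [Submodule.orthogonal_orthogonal]
        exact Submodule.mem_span_singleton_self d
      have hPlim : Tendsto (fun k => (t k)⁻¹ • P (x' k)) atTop (𝓝 0) := by
        have h1 : Tendsto (fun k => P ((t k)⁻¹ • x' k)) atTop (𝓝 (P d)) :=
          (P.continuous.tendsto d).comp hlim'
        rw [hPd] at h1
        refine h1.congr (fun k => ?_)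
        rw [map_smul]
      have hPnorm : Tendsto (fun k => ‖(t k)⁻¹ • P (x' k)‖) atTop (𝓝 0) := by
        have := hPlim.norm
        rwa [norm_zero] at this
      have hbinv : Tendsto (fun k => (β (x' k) * (t k)⁻¹)⁻¹) atTop (𝓝 1) := by
        have h1 : Tendsto (fun k => β (x' k) * (t k)⁻¹) atTop (𝓝 1) := by
          have h2 : Tendsto (fun k => ((t k)⁻¹ * ⟪d, x' k⟫) / ‖d‖^2) atTop (𝓝 (‖d‖^2 / ‖d‖^2)) :=
            hinn.div_const _
          rw [div_self hd2.ne'] at h2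
          refine h2.congr (fun k => ?_)
          simp only [hβ]; ring
        have := h1.inv₀ one_ne_zero
        rwa [inv_one] at this
      have hq : Tendsto (fun k => ‖(P (x' k) : F)‖ / β (x' k)) atTop (𝓝 0) := by
        have hβpos : ∀ᶠ k in atTop, 0 < β (x' k) := ha.eventually_gt_atTop 0
        have h1 : Tendsto (fun k => ‖(t k)⁻¹ • P (x' k)‖ * (β (x' k) * (t k)⁻¹)⁻¹)
            atTop (𝓝 (0 * 1)) := hPnorm.mul hbinv
        rw [zero_mul] at h1
        refine Tendsto.congr' ?_ h1
        filter_upwards [htpos, hβpos] with k hk1 hk2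
        have hnorm : ‖(t k)⁻¹ • P (x' k)‖ = (t k)⁻¹ * ‖(P (x' k) : F)‖ := by
          rw [norm_smul, Real.norm_eq_abs, abs_of_pos (by positivity)]
          congr 1
        rw [hnorm]
        field_simp
      obtain ⟨y, hy, hfib⟩ := fiber_core hX' h0X' (hSdef ▸ hS) hd0 x' hx' ha (by
        simpa only [hβ, hP] using hq)
      exact ⟨y, hy, hfib⟩
    · -- restrict to the span
      have hrkS : Module.finrank ℝ ↥S ≤ n := by
        have h1 : Module.finrank ℝ ↥S < Module.finrank ℝ F :=
          Submodule.finrank_lt hS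
        omega
      set X'' : Set ↥S := (Submodule.subtype S) ⁻¹' X' with hX''def
      have hX'' : Convex ℝ X'' := hX'.linear_preimage (Submodule.subtype S)
      set d'' : ↥S := ⟨d, hdS⟩ with hd''def
      have hd''0 : d'' ≠ 0 := fun h => hd0 (congrArg Subtype.val h)
      set x'' : ℕ → ↥S := fun k => ⟨x' k, hxS k⟩ with hx''def
      have hx''X : ∀ k, x'' k ∈ X'' := fun k => hx' k
      have hlim'' : Tendsto (fun k => (t k)⁻¹ • x'' k) atTop (𝓝 d'') := by
        rw [tendsto_subtype_rng]
        exact hlim'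
      obtain ⟨y'', hy''X, hfib⟩ := ih ↥S inferInstance inferInstance inferInstance hrkS X'' hX'' d'' hd''0 t x'' ht hx''X hlim''
      refine ⟨(y'' : F), hy''X, fun M => ?_⟩
      obtain ⟨τ, hτ, hmem⟩ := hfib M
      refine ⟨τ, hτ, ?_⟩
      have : ((y'' + τ • d'' : ↥S) : F) = (y'' : F) + τ • d := rfl
      rw [← this]
      exact hmem

/-- From a nonpositive q-asymptotic function, `f` descends along the ray. -/
lemma descent_of_qAsympFun {f : E → EReal} (hproper : ∀ x, f x ≠ ⊥) {d : E}
    (hqd : qAsympFun f d ≤ 0) :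
    ∀ w : E, f w ≠ ⊤ → ∀ s : ℝ, 0 < s → f (w + s • d) ≤ f w := by
  intro w hw s hs
  have h1 : ((s⁻¹ : ℝ) : EReal) * (f (w + s • d) - f w) ≤ 0 := by
    refine le_trans (le_trans ?_ (le_biSup
      (fun x => ⨆ t ∈ Set.Ioi (0:ℝ), ((t⁻¹ : ℝ) : EReal) * (f (x + t • d) - f x))
      (show w ∈ {x : E | f x ≠ ⊤} from hw))) hqd
    exact le_biSup (fun t : ℝ => ((t⁻¹ : ℝ) : EReal) * (f (w + t • d) - f w))
      (Set.mem_Ioi.2 hs)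
  have h2 : f (w + s • d) - f w ≤ 0 := by
    by_contra hc
    push_neg at hc
    have h3 : (0:EReal) < ((s⁻¹ : ℝ) : EReal) := by
      rw [EReal.coe_pos]; exact inv_pos.2 hs
    exact absurd h1 (not_le.2 (EReal.mul_pos h3 hc))
  have hwr : f w = (((f w).toReal : ℝ) : EReal) := (EReal.coe_toReal hw (hproper w)).symm
  rw [hwr] at h2 ⊢
  rcases eq_or_ne (f (w + s • d)) ⊤ with htop | hne
  · rw [htop, EReal.top_sub_coe] at h2
    exact absurd h2 (by simp)
  · have hz : f (w + s • d) = (((f (w + s • d)).toReal : ℝ) : EReal) :=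
      (EReal.coe_toReal hne (hproper _)).symm
    rw [hz] at h2 ⊢
    rw [← EReal.coe_sub] at h2
    have h5 : (f (w + s • d)).toReal - (f w).toReal ≤ 0 := by exact_mod_cast h2
    exact_mod_cast (by linarith : (f (w + s • d)).toReal ≤ (f w).toReal)

set_option maxHeartbeats 1000000 in
theorem stmt19 {n : ℕ} (f : EuclideanSpace ℝ (Fin n) → EReal)
    (X : Set (EuclideanSpace ℝ (Fin n)))
    (hproper : ERealProper f) (hXconv : Convex ℝ X)
    (hq : ERealQuasiconvex f) (hdom : X ⊆ {x | f x ≠ ⊤})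
    (xbar : EuclideanSpace ℝ (Fin n)) (hSol : Sol f X 0 = {xbar})
    (d : EuclideanSpace ℝ (Fin n)) (hd : d ∈ asympCone X) (hd0 : d ≠ 0)
    (hqd : qAsympFun f d ≤ 0) :
    (∀ k : ℕ, 0 < k →
      (qAsympFun (fun x => f x - ((inner ℝ ((1 / (k : ℝ)) • d) x : ℝ) : EReal)) d < 0 ∧
       Tendsto (fun t : ℝ =>
           f (xbar + t • d) - ((inner ℝ ((1 / (k : ℝ)) • d) (xbar + t • d) : ℝ) : EReal))
         atTop (𝓝 ⊥) ∧
       Sol f X ((1 / (k : ℝ)) • d) = ∅)) ∧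
    ¬ ((Sol f X 0).Nonempty ∧
        ∀ V : Set (EuclideanSpace ℝ (Fin n)), IsOpen V → (Sol f X 0 ∩ V).Nonempty →
          ∃ δ > (0:ℝ), ∀ u : EuclideanSpace ℝ (Fin n), ‖u‖ < δ →
            (Sol f X u ∩ V).Nonempty) := by
  obtain ⟨hpbot, -⟩ := hproper
  have hxbarSol : xbar ∈ Sol f X 0 := by rw [hSol]; exact rfl
  have hxbarX : xbar ∈ X := hxbarSol.1
  have hd2 : (0:ℝ) < ‖d‖^2 := pow_pos (norm_pos_iff.2 hd0) 2
  have hdesc := descent_of_qAsympFun hpbot hqd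
  have hfib : ∃ y ∈ X, ∀ M : ℝ, ∃ τ : ℝ, M ≤ τ ∧ y + τ • d ∈ X := by
    obtain ⟨t, xx, ht, hxx, hlim⟩ := hd
    exact fiber_wrap (Module.finrank ℝ (EuclideanSpace ℝ (Fin n))) _
      inferInstance inferInstance inferInstance le_rfl X hXconv d hd0 t xx ht hxx hlim
  have main : ∀ k : ℕ, 0 < k →
      (qAsympFun (fun x => f x - ((inner ℝ ((1 / (k : ℝ)) • d) x : ℝ) : EReal)) d < 0 ∧
       Tendsto (fun t : ℝ =>
           f (xbar + t • d) - ((inner ℝ ((1 / (k : ℝ)) • d) (xbar + t • d) : ℝ) : EReal))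
         atTop (𝓝 ⊥) ∧
       Sol f X ((1 / (k : ℝ)) • d) = ∅) := by
    intro k hk
    set u : EuclideanSpace ℝ (Fin n) := (1 / (k : ℝ)) • d with hu
    have hkpos : (0:ℝ) < 1 / (k : ℝ) := by
      have : (0:ℝ) < (k:ℝ) := Nat.cast_pos.2 hk
      positivity
    have hud : ⟪u, d⟫ = (1 / (k : ℝ)) * ‖d‖^2 := by
      rw [hu, real_inner_smul_left, real_inner_self_eq_norm_sq]
    have hcu : (0:ℝ) < ⟪u, d⟫ := by rw [hud]; positivity
    have hinner : ∀ (w : EuclideanSpace ℝ (Fin n)) (s : ℝ),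
        ⟪u, w + s • d⟫ = ⟪u, w⟫ + s * ⟪u, d⟫ := by
      intro w s
      rw [inner_add_right, real_inner_smul_right]
    refine ⟨?_, ?_, ?_⟩
    · -- (a)
      have hbound : qAsympFun (fun x => f x - ((⟪u, x⟫ : ℝ) : EReal)) d
          ≤ ((-⟪u, d⟫ : ℝ) : EReal) := by
        refine iSup₂_le ?_
        intro w hw
        refine iSup₂_le ?_
        intro s hs
        rw [Set.mem_Ioi] at hs
        have hfw_ne : f w ≠ ⊤ := by
          intro hfw
          apply hw
          show f w - ((⟪u, w⟫ : ℝ) : EReal) = ⊤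
          rw [hfw, EReal.top_sub_coe]
        set r : ℝ := (f w).toReal with hr
        have hfwr : f w = (r : EReal) := (EReal.coe_toReal hfw_ne (hpbot w)).symm
        have hfz := hdesc w hfw_ne s hs
        have hfz_ne_top : f (w + s • d) ≠ ⊤ := by
          intro hc
          rw [hc, hfwr] at hfz
          exact absurd hfz (by simp)
        set ρ : ℝ := (f (w + s • d)).toReal with hρ
        have hfzr : f (w + s • d) = (ρ : EReal) :=
          (EReal.coe_toReal hfz_ne_top (hpbot _)).symm
        have hρr : ρ ≤ r := by
          rw [hfzr, hfwr] at hfz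
          exact_mod_cast hfz
        have heq : ((s⁻¹ : ℝ) : EReal) *
            ((f (w + s • d) - ((⟪u, w + s • d⟫ : ℝ) : EReal))
              - (f w - ((⟪u, w⟫ : ℝ) : EReal)))
            = ((s⁻¹ * ((ρ - (⟪u, w⟫ + s * ⟪u, d⟫)) - (r - ⟪u, w⟫)) : ℝ) : EReal) := by
          rw [hfzr, hfwr, hinner w s, ← EReal.coe_sub, ← EReal.coe_sub, ← EReal.coe_sub,
            ← EReal.coe_mul]
        rw [heq, EReal.coe_le_coe_iff]
        have h5 : s⁻¹ * ((ρ - (⟪u, w⟫ + s * ⟪u, d⟫)) - (r - ⟪u, w⟫))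
            = s⁻¹ * (ρ - r) - ⟪u, d⟫ := by
          field_simp
          ring
        rw [h5]
        have h6 : s⁻¹ * (ρ - r) ≤ 0 :=
          mul_nonpos_of_nonneg_of_nonpos (inv_pos.2 hs).le (by linarith)
        linarith
      refine lt_of_le_of_lt hbound ?_
      have : ((-⟪u, d⟫ : ℝ) : EReal) < ((0:ℝ) : EReal) := by
        rw [EReal.coe_lt_coe_iff]; linarith
      simpa using this
    · -- (b)
      rw [EReal.tendsto_nhds_bot_iff_real]
      intro M
      have hfxbar_ne : f xbar ≠ ⊤ := hdom hxbarX
      set r : ℝ := (f xbar).toReal with hr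
      have hfxr : f xbar = (r : EReal) := (EReal.coe_toReal hfxbar_ne (hpbot _)).symm
      set A : ℝ := ⟪u, xbar⟫ with hA
      filter_upwards [eventually_ge_atTop (max 1 ((r - A - M) / ⟪u, d⟫ + 1))] with s hs
      have hs1 : (1:ℝ) ≤ s := le_trans (le_max_left _ _) hs
      have h1 : f (xbar + s • d) ≤ (r : EReal) := by
        rw [← hfxr]
        exact hdesc xbar hfxbar_ne s (by linarith)
      have h2 : f (xbar + s • d) - ((⟪u, xbar + s • d⟫ : ℝ) : EReal)
          ≤ (((r - (A + s * ⟪u, d⟫)) : ℝ) : EReal) := by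
        rw [hinner xbar s, ← hA, EReal.coe_sub]
        exact EReal.sub_le_sub h1 (le_refl _)
      refine lt_of_le_of_lt h2 ?_
      rw [EReal.coe_lt_coe_iff]
      have h3 : (r - A - M) / ⟪u, d⟫ + 1 ≤ s := le_trans (le_max_right _ _) hs
      have h4 := mul_le_mul_of_nonneg_right h3 hcu.le
      rw [add_mul, one_mul, div_mul_cancel₀ _ hcu.ne'] at h4
      nlinarith
    · -- (c)
      rw [Set.eq_empty_iff_forall_notMem]
      intro xs hxs
      obtain ⟨hxsX, hmin⟩ := hxs
      obtain ⟨y, hyX, hfibM⟩ := hfib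
      have hfy_ne : f y ≠ ⊤ := hdom hyX
      set ry : ℝ := (f y).toReal with hry
      have hfyr : f y = (ry : EReal) := (EReal.coe_toReal hfy_ne (hpbot _)).symm
      have hfxs_ne : f xs ≠ ⊤ := hdom hxsX
      set rs : ℝ := (f xs).toReal with hrs
      have hfxsr : f xs = (rs : EReal) := (EReal.coe_toReal hfxs_ne (hpbot _)).symm
      set ms : ℝ := rs - ⟪u, xs⟫ with hms
      obtain ⟨τ, hτ, hzX⟩ := hfibM (max 1 ((ry - ⟪u, y⟫ - ms + 1) / ⟪u, d⟫))
      have hτ1 : (1:ℝ) ≤ τ := le_trans (le_max_left _ _) hτ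
      have h1 := hmin (y + τ • d) hzX
      have h2 : f (y + τ • d) ≤ (ry : EReal) := by
        rw [← hfyr]
        exact hdesc y hfy_ne τ (by linarith)
      have h3 : f (y + τ • d) - ((⟪u, y + τ • d⟫ : ℝ) : EReal)
          ≤ (((ry - (⟪u, y⟫ + τ * ⟪u, d⟫)) : ℝ) : EReal) := by
        rw [hinner y τ, EReal.coe_sub]
        exact EReal.sub_le_sub h2 (le_refl _)
      have h4 : ((ms : ℝ) : EReal) ≤ (((ry - (⟪u, y⟫ + τ * ⟪u, d⟫)) : ℝ) : EReal) := by
        refine le_trans ?_ (le_trans h1 h3)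
        rw [hfxsr, ← EReal.coe_sub]
      rw [EReal.coe_le_coe_iff] at h4
      have h5 : (ry - ⟪u, y⟫ - ms + 1) / ⟪u, d⟫ ≤ τ := le_trans (le_max_right _ _) hτ
      have h6 := mul_le_mul_of_nonneg_right h5 hcu.le
      rw [div_mul_cancel₀ _ hcu.ne'] at h6
      nlinarith
  refine ⟨main, ?_⟩
  rintro ⟨hne, hlsc⟩
  obtain ⟨δ, hδ, hδ2⟩ := hlsc Set.univ isOpen_univ
    (by rw [hSol]; exact ⟨xbar, rfl, trivial⟩)
  obtain ⟨k, hk⟩ := exists_nat_gt (‖d‖ / δ)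
  have hk0 : 0 < k := by
    have h1 : (0:ℝ) ≤ ‖d‖ / δ := by positivity
    exact_mod_cast Nat.cast_pos.1 (lt_of_le_of_lt h1 hk)
  have hkR : (0:ℝ) < (k:ℝ) := Nat.cast_pos.2 hk0
  have hnorm : ‖(1 / (k : ℝ)) • d‖ < δ := by
    rw [norm_smul, Real.norm_eq_abs, abs_of_pos (by positivity)]
    rw [div_lt_iff₀ hδ] at hk
    rw [one_div, inv_mul_lt_iff₀ hkR] -- (1/k)*‖d‖ < δ ↔ ‖d‖ < k*δ
    linarith
  have hcontra := hδ2 _ hnorm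
  rw [(main k hk0).2.2] at hcontra
  simp at hcontra
end
end
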